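/- arXiv:2208.04054 — 6 statements merged into one kernel-verified Lean document; each statement's English description precedes it below -/
import Mathlib

section
/- Let X and Y be identically distributed ℝ^d-valued random vectors whose norm is regularly varying with index α > 0, and assume X and Y are asymptotically independent, i.e. lim_{x→∞} P(‖X‖ > x, ‖Y‖ > x)/P(‖X‖ > x) = 0. Then the random vector (X,Y) ∈ ℝ^{2d} has regularly varying norm with the same index α; that is, for every u > 0, lim_{x→∞} P(max(‖X‖,‖Y‖) > ux)/P(max(‖X‖,‖Y‖) > x) = u^{-α}. -/
open MeasureTheory Filter

noncomputable section

/-- An `ℝ^d`-valued random vector has regularly varying (max-)norm with index `α > 0`: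
`P(‖X‖ > x) > 0` for all `x > 0` and `P(‖X‖ > ux)/P(‖X‖ > x) → u^{-α}` as `x → ∞`. -/
def RegVaryingNorm {Ω : Type*} [MeasurableSpace Ω] (P : Measure Ω) {d : ℕ}
    (X : Ω → (Fin d → ℝ)) (α : ℝ) : Prop :=
  (∀ x : ℝ, 0 < x → 0 < (P {ω | x < ‖X ω‖}).toReal) ∧
  (∀ u : ℝ, 0 < u →
    Tendsto (fun x : ℝ => (P {ω | u * x < ‖X ω‖}).toReal / (P {ω | x < ‖X ω‖}).toReal)
      atTop (nhds (u ^ (-α))))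

lemma aux_div_chain (a b c e : ℝ) (hb : b ≠ 0) (hc : c ≠ 0) :
    a / b * (b / c) * (c / e) = a / e := by
  field_simp

/-- Proposition 2.1 (cf. Proposition 2.1.8 in Kulik–Soulier): if `X` and `Y` are identically
distributed random vectors with regularly varying norm of index `α > 0` and they are
asymptotically independent, then `(X, Y)` has regularly varying norm with the same index `α`,
i.e. for every `u > 0`,
`P(max(‖X‖,‖Y‖) > ux)/P(max(‖X‖,‖Y‖) > x) → u^{-α}` as `x → ∞`. -/
theorem stmt0 {Ω : Type*} [MeasurableSpace Ω] (P : Measure Ω) [IsProbabilityMeasure P]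
    {d : ℕ} (X Y : Ω → (Fin d → ℝ)) (hXmeas : Measurable X) (hYmeas : Measurable Y)
    (hid : Measure.map X P = Measure.map Y P)
    {α : ℝ} (hα : 0 < α) (hrv : RegVaryingNorm P X α)
    (hai : Tendsto (fun x : ℝ =>
        (P {ω | x < ‖X ω‖ ∧ x < ‖Y ω‖}).toReal / (P {ω | x < ‖X ω‖}).toReal)
      atTop (nhds 0)) :
    ∀ u : ℝ, 0 < u →
      Tendsto (fun x : ℝ =>
          (P {ω | u * x < max ‖X ω‖ ‖Y ω‖}).toReal /
            (P {ω | x < max ‖X ω‖ ‖Y ω‖}).toReal)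
        atTop (nhds (u ^ (-α))) := by
  obtain ⟨hpos, hlim⟩ := hrv
  set f : ℝ → ℝ := fun x => (P {ω | x < ‖X ω‖}).toReal with hf
  set g : ℝ → ℝ := fun x => (P {ω | x < max ‖X ω‖ ‖Y ω‖}).toReal with hg
  set j : ℝ → ℝ := fun x => (P {ω | x < ‖X ω‖ ∧ x < ‖Y ω‖}).toReal with hj
  have hSmeas : ∀ x : ℝ, MeasurableSet {v : Fin d → ℝ | x < ‖v‖} := fun x =>
    measurableSet_lt measurable_const measurable_norm
  have hYX : ∀ x : ℝ, P {ω | x < ‖Y ω‖} = P {ω | x < ‖X ω‖} := by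
    intro x
    have h1 : P {ω | x < ‖Y ω‖} = (Measure.map Y P) {v | x < ‖v‖} := by
      rw [Measure.map_apply hYmeas (hSmeas x)]; rfl
    have h2 : P {ω | x < ‖X ω‖} = (Measure.map X P) {v | x < ‖v‖} := by
      rw [Measure.map_apply hXmeas (hSmeas x)]; rfl
    rw [h1, h2, hid]
  have hgeq : ∀ x : ℝ, g x = 2 * f x - j x := by
    intro x
    have hset : {ω | x < max ‖X ω‖ ‖Y ω‖} = {ω | x < ‖X ω‖} ∪ {ω | x < ‖Y ω‖} := by
      ext ω; simp [lt_max_iff, Set.mem_union, Set.mem_setOf_eq]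
    have hint : {ω | x < ‖X ω‖ ∧ x < ‖Y ω‖} = {ω | x < ‖X ω‖} ∩ {ω | x < ‖Y ω‖} := rfl
    have key := measure_union_add_inter (μ := P) {ω | x < ‖X ω‖}
      (t := {ω | x < ‖Y ω‖}) (hYmeas (hSmeas x))
    rw [hYX x] at key
    have hA := measure_ne_top P {ω | x < ‖X ω‖}
    have hU := measure_ne_top P ({ω | x < ‖X ω‖} ∪ {ω | x < ‖Y ω‖})
    have hI := measure_ne_top P ({ω | x < ‖X ω‖} ∩ {ω | x < ‖Y ω‖})
    have key' := congrArg ENNReal.toReal key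
    rw [ENNReal.toReal_add hU hI, ENNReal.toReal_add hA hA] at key'
    simp only [hg, hj, hf, hset, hint]
    linarith
  have hfg : ∀ x : ℝ, f x ≤ g x := by
    intro x
    apply ENNReal.toReal_le_toReal (measure_ne_top _ _) (measure_ne_top _ _) |>.mpr
    refine measure_mono fun ω hω => ?_
    simp only [Set.mem_setOf_eq] at hω ⊢
    exact lt_sup_of_lt_left hω
  have h2 : Tendsto (fun x => g x / f x) atTop (nhds 2) := by
    have heq : ∀ᶠ x in atTop, 2 - j x / f x = g x / f x := by
      filter_upwards [eventually_gt_atTop (0 : ℝ)] with x hx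
      have hfx := hpos x hx
      rw [hgeq x]
      have hfx' : f x ≠ 0 := hfx.ne'
      rw [eq_div_iff hfx', sub_mul, div_mul_cancel₀ _ hfx']
    have : Tendsto (fun x => 2 - j x / f x) atTop (nhds (2 - 0)) :=
      tendsto_const_nhds.sub hai
    simpa using this.congr' heq
  have h3 : Tendsto (fun x => f x / g x) atTop (nhds 2⁻¹) := by
    simpa [inv_div] using h2.inv₀ two_ne_zero
  intro u hu
  have hmul : Tendsto (fun x : ℝ => u * x) atTop atTop :=
    Tendsto.const_mul_atTop hu tendsto_id
  have h4 : Tendsto (fun x => g (u * x) / f (u * x)) atTop (nhds 2) := h2.comp hmul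
  have h5 : Tendsto (fun x => f (u * x) / f x) atTop (nhds (u ^ (-α))) := hlim u hu
  have hprod : Tendsto (fun x => g (u * x) / f (u * x) * (f (u * x) / f x) * (f x / g x))
      atTop (nhds (2 * u ^ (-α) * 2⁻¹)) := (h4.mul h5).mul h3
  have hval : 2 * u ^ (-α) * 2⁻¹ = u ^ (-α) := by ring
  rw [hval] at hprod
  refine hprod.congr' ?_
  filter_upwards [eventually_gt_atTop (0 : ℝ)] with x hx
  have hfx : 0 < f x := hpos x hx
  have hfux : 0 < f (u * x) := hpos (u * x) (by positivity)
  have hgx : 0 < g x := lt_of_lt_of_le hfx (hfg x)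
  show _ = g (u * x) / g x
  exact aux_div_chain _ _ _ _ hfux.ne' hfx.ne'

end
end

section
/- Let ξ be an ℝ^d-valued random vector whose norm is regularly varying with index α > 0, and let (a_n) be a sequence of positive reals with lim_{n→∞} n·P(‖ξ‖ > a_n) = 1. Then for every δ ∈ (0,α), limsup_{n→∞} n·E[(‖ξ‖/a_n)^δ · 1_{{‖ξ‖ > a_n}}] ≤ α/(α − δ). -/
open MeasureTheory Filter ENNReal

noncomputable section

lemma aux_tendsto12 {δ α : ℝ} (hδα : δ < α) :
    Tendsto (fun u : ℝ => 1 + (u ^ δ - 1) / ((1 - u ^ (δ - α)) * (2 - u)))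
      (nhdsWithin 1 (Set.Ioi 1)) (nhds (α / (α - δ))) := by
  have hsub : nhdsWithin (1:ℝ) (Set.Ioi 1) ≤ nhdsWithin 1 {(1:ℝ)}ᶜ :=
    nhdsWithin_mono _ (fun x hx => ne_of_gt hx)
  have slope_tendsto : ∀ p : ℝ, Tendsto (fun u : ℝ => (u ^ p - 1) / (u - 1))
      (nhdsWithin 1 (Set.Ioi 1)) (nhds p) := by
    intro p
    have hd : HasDerivAt (fun x : ℝ => x ^ p) (p * (1:ℝ) ^ (p - 1)) 1 :=
      Real.hasDerivAt_rpow_const (Or.inl one_ne_zero)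
    have h := (hasDerivAt_iff_tendsto_slope.mp hd).mono_left hsub
    rw [show p * (1:ℝ) ^ (p-1) = p by simp] at h
    exact h.congr (fun u => by simp [slope_def_field, Real.one_rpow])
  have h1 := slope_tendsto δ
  have h2 : Tendsto (fun u : ℝ => (1 - u ^ (δ - α)) / (u - 1))
      (nhdsWithin 1 (Set.Ioi 1)) (nhds (α - δ)) := by
    have := (slope_tendsto (δ - α)).neg
    rw [show -(δ - α) = α - δ by ring] at this
    exact this.congr (fun u => by ring)
  have hne : α - δ ≠ 0 := ne_of_gt (by linarith)
  have h3 : Tendsto (fun u : ℝ => (u ^ δ - 1) / (1 - u ^ (δ - α)))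
      (nhdsWithin 1 (Set.Ioi 1)) (nhds (δ / (α - δ))) := by
    have := h1.div h2 hne
    refine this.congr' ?_
    filter_upwards [self_mem_nhdsWithin] with u hu
    have hu1 : u - 1 ≠ 0 := sub_ne_zero.mpr (ne_of_gt hu)
    rw [Pi.div_apply, div_div_div_cancel_right₀ hu1]
  have h4 : Tendsto (fun u : ℝ => (2 - u)⁻¹) (nhdsWithin 1 (Set.Ioi 1)) (nhds 1) := by
    have : Tendsto (fun u : ℝ => (2 - u)⁻¹) (nhds 1) (nhds 1) := by
      have : ContinuousAt (fun u : ℝ => (2 - u)⁻¹) 1 := by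
        apply ContinuousAt.inv₀ (by fun_prop) (by norm_num)
      have := this.tendsto; norm_num at this; exact this
    exact this.mono_left nhdsWithin_le_nhds
  have h5 := h3.mul h4
  rw [mul_one] at h5
  have h6 := (tendsto_const_nhds (x := (1:ℝ))).add h5
  have heq : 1 + δ / (α - δ) = α / (α - δ) := by field_simp; ring
  rw [heq] at h6
  exact h6.congr (fun u => by rw [div_mul_eq_div_div]; ring_nf)

lemma aux_find12 (u : ℝ) (hu1 : 1 < u) (Y : ℝ) (hY : 1 < Y) :
    ∃ m : ℕ, Y ≤ u ^ (m + 1) ∧ ∀ j ≤ m, u ^ j < Y := by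
  have hex : ∃ m : ℕ, Y ≤ u ^ (m + 1) := by
    obtain ⟨m, hm⟩ := pow_unbounded_of_one_lt Y hu1
    exact ⟨m, le_trans hm.le (pow_le_pow_right₀ (le_of_lt hu1) (Nat.le_succ m))⟩
  refine ⟨Nat.find hex, Nat.find_spec hex, ?_⟩
  intro j hj
  rcases j with _ | i
  · simpa using hY
  · have hi : i < Nat.find hex := lt_of_lt_of_le (Nat.lt_succ_self i) hj
    have := Nat.find_min hex hi
    push_neg at this
    exact this

/-- Karamata-type bound: if `ξ` has regularly varying norm with index `α > 0` and
`n·P(‖ξ‖ > a_n) → 1`, then for every `δ ∈ (0,α)`,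
`limsup_n n·E[(‖ξ‖/a_n)^δ · 1_{‖ξ‖ > a_n}] ≤ α/(α − δ)`. -/
theorem stmt12 {Ω : Type*} [MeasurableSpace Ω] (P : Measure Ω) [IsProbabilityMeasure P]
    {d : ℕ} (ξ : Ω → (Fin d → ℝ)) (hmeas : Measurable ξ)
    {α : ℝ} (hα : 0 < α) (hrv : RegVaryingNorm P ξ α)
    (a : ℕ → ℝ) (ha : ∀ n, 0 < a n)
    (hlim : Tendsto (fun n : ℕ => (n : ℝ) * (P {ω | a n < ‖ξ ω‖}).toReal) atTop (nhds 1)) :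
    ∀ δ : ℝ, 0 < δ → δ < α →
      limsup (fun n : ℕ => (n : ℝ≥0∞) *
          ∫⁻ ω in {ω | a n < ‖ξ ω‖}, ENNReal.ofReal ((‖ξ ω‖ / a n) ^ δ) ∂P) atTop
        ≤ ENNReal.ofReal (α / (α - δ)) := by
  intro δ hδ hδα
  have hnormmeas : Measurable fun ω => ‖ξ ω‖ := hmeas.norm
  have hmeasA : ∀ c : ℝ, MeasurableSet {ω | c < ‖ξ ω‖} :=
    fun c => measurableSet_lt measurable_const hnormmeas
  set T : ℝ → ℝ := fun x => (P {ω | x < ‖ξ ω‖}).toReal with hTdef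
  have hTmono : ∀ {x y : ℝ}, x ≤ y → T y ≤ T x := by
    intro x y hxy
    refine ENNReal.toReal_mono (measure_ne_top P _) (measure_mono ?_)
    intro ω hω; exact lt_of_le_of_lt hxy hω
  have hTpos : ∀ x : ℝ, 0 < x → 0 < T x := hrv.1
  have hTnonneg : ∀ x, 0 ≤ T x := fun x => ENNReal.toReal_nonneg
  have hlim' : Tendsto (fun n : ℕ => (n : ℝ) * T (a n)) atTop (nhds 1) := hlim
  -- Step A : a_n → ∞
  have hT0 : Tendsto (fun n => T (a n)) atTop (nhds 0) := by
    have hinv : Tendsto (fun n : ℕ => ((n : ℝ))⁻¹) atTop (nhds 0) :=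
      tendsto_inv_atTop_zero.comp tendsto_natCast_atTop_atTop
    have h := hlim'.mul hinv
    rw [one_mul] at h
    refine h.congr' ?_
    filter_upwards [eventually_ge_atTop 1] with n hn
    have hn0 : (n : ℝ) ≠ 0 := by positivity
    field_simp
  have ha_top : Tendsto a atTop atTop := by
    rw [tendsto_atTop]
    intro b
    by_contra hb
    rw [not_eventually] at hb
    push_neg at hb
    have hb' : ∃ᶠ n in atTop, a n < max b 1 :=
      hb.mono (fun n hn => lt_of_lt_of_le hn (le_max_left _ _))
    have hpos : 0 < T (max b 1) := hTpos _ (by positivity)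
    have hev : ∀ᶠ n : ℕ in atTop, T (a n) < T (max b 1) := hT0.eventually_lt_const hpos
    obtain ⟨n, hn1, hn2⟩ := (hb'.and_eventually hev).exists
    exact absurd (hTmono hn1.le) (not_le.mpr hn2)
  -- main ε-argument
  apply ENNReal.le_of_forall_pos_le_add
  intro η hη _
  -- choose u
  obtain ⟨u, hgu, hu1, hu2⟩ : ∃ u : ℝ, (1 + (u ^ δ - 1) / ((1 - u ^ (δ - α)) * (2 - u))
      < α / (α - δ) + η) ∧ 1 < u ∧ u < 2 := by
    have h := aux_tendsto12 (α := α) (δ := δ) hδα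
    have hlt : α / (α - δ) < α / (α - δ) + (η : ℝ) := by
      have : (0:ℝ) < η := hη
      linarith
    have h1 := h.eventually_lt_const hlt
    have h2 : ∀ᶠ u : ℝ in nhdsWithin 1 (Set.Ioi 1), u < 2 := by
      apply eventually_nhdsWithin_of_eventually_nhds
      exact Filter.Tendsto.eventually_lt_const (by norm_num) (tendsto_id (x := nhds (1:ℝ)))
    have h3 : ∀ᶠ u : ℝ in nhdsWithin 1 (Set.Ioi 1), 1 < u := self_mem_nhdsWithin
    obtain ⟨u, hh1, hh2, hh3⟩ := (h1.and (h2.and h3)).exists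
    exact ⟨u, hh1, hh3, hh2⟩
  have hu0 : (0:ℝ) < u := by linarith
  set v : ℝ := u ^ δ with hvdef
  have hvpos : 0 < v := Real.rpow_pos_of_pos hu0 δ
  have hv1 : 1 < v := Real.one_lt_rpow_iff_of_pos hu0 |>.2 (Or.inl ⟨hu1, hδ⟩)
  have hUδα1 : u ^ (δ - α) < 1 := Real.rpow_lt_one_of_one_lt_of_neg hu1 (by linarith)
  have hUδα0 : 0 < u ^ (δ - α) := Real.rpow_pos_of_pos hu0 _
  set ε : ℝ := (u - 1) * (1 - u ^ (δ - α)) / v with hεdef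
  have hε : 0 < ε := div_pos (mul_pos (by linarith) (by linarith)) hvpos
  set r0 : ℝ := u ^ (-α) + ε with hr0def
  have hr00 : 0 < r0 := add_pos (Real.rpow_pos_of_pos hu0 _) hε
  set w : ℝ := v * r0 with hwdef
  have hw_eq : 1 - w = (1 - u ^ (δ - α)) * (2 - u) := by
    have h1 : v * u ^ (-α) = u ^ (δ - α) := by
      rw [hvdef, ← Real.rpow_add hu0]; ring_nf
    have h2 : v * ε = (u - 1) * (1 - u ^ (δ - α)) := by
      rw [hεdef]; field_simp
    calc 1 - w = 1 - (v * u ^ (-α) + v * ε) := by rw [hwdef, hr0def]; ring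
    _ = 1 - (u ^ (δ - α) + (u - 1) * (1 - u ^ (δ - α))) := by rw [h1, h2]
    _ = (1 - u ^ (δ - α)) * (2 - u) := by ring
  have h1w : 0 < 1 - w := by
    rw [hw_eq]; exact mul_pos (by linarith) (by linarith)
  have hw1 : w < 1 := by linarith
  have hw0 : 0 ≤ w := le_of_lt (mul_pos hvpos hr00)
  set B : ℝ := 1 + (v - 1) * (1 - w)⁻¹ with hBdef
  have hB0 : 0 ≤ B := by rw [hBdef]; nlinarith [mul_nonneg (sub_nonneg.mpr hv1.le) (inv_nonneg.mpr h1w.le)]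
  have hBgu : B < α / (α - δ) + η := by
    have : (v - 1) * (1 - w)⁻¹ = (u ^ δ - 1) / ((1 - u ^ (δ - α)) * (2 - u)) := by
      rw [← hw_eq, ← hvdef, div_eq_mul_inv]
    rw [hBdef, this]
    exact hgu
  -- Step B : iterated tail bound
  obtain ⟨X₀, hX₀1, hX₀⟩ : ∃ X₀ : ℝ, 1 ≤ X₀ ∧ ∀ y, X₀ ≤ y → T (u * y) ≤ r0 * T y := by
    have htt := (hrv.2 u hu0).eventually_lt_const (lt_add_of_pos_right (u ^ (-α)) hε)
    obtain ⟨X₁, hX₁⟩ := eventually_atTop.mp htt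
    refine ⟨max X₁ 1, le_max_right _ _, ?_⟩
    intro y hy
    have hy1 : (1:ℝ) ≤ y := le_trans (le_max_right _ _) hy
    have hTy : 0 < T y := hTpos y (by linarith)
    have h' : T (u * y) / T y < r0 := hX₁ y (le_trans (le_max_left _ _) hy)
    have := (div_lt_iff₀ hTy).mp h'
    linarith
  have hiter : ∀ k : ℕ, ∀ y : ℝ, X₀ ≤ y → T (u ^ k * y) ≤ r0 ^ k * T y := by
    intro k
    induction k with
    | zero => intro y _; simp
    | succ k ih =>
      intro y hy
      have hy0 : 0 < y := lt_of_lt_of_le (by linarith) hy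
      have hky : X₀ ≤ u ^ k * y :=
        le_trans hy (le_mul_of_one_le_left hy0.le (one_le_pow₀ hu1.le))
      have h1 : u ^ (k + 1) * y = u * (u ^ k * y) := by ring
      rw [h1]
      calc T (u * (u ^ k * y)) ≤ r0 * T (u ^ k * y) := hX₀ _ hky
      _ ≤ r0 * (r0 ^ k * T y) := mul_le_mul_of_nonneg_left (ih y hy) hr00.le
      _ = r0 ^ (k + 1) * T y := by ring
  -- Step C : the key per-n bound
  have key : ∀ n : ℕ, X₀ ≤ a n →
      (n : ℝ≥0∞) * ∫⁻ ω in {ω | a n < ‖ξ ω‖}, ENNReal.ofReal ((‖ξ ω‖ / a n) ^ δ) ∂P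
        ≤ ENNReal.ofReal (((n : ℝ) * T (a n)) * B) := by
    intro n hXn
    set S : Set Ω := {ω | a n < ‖ξ ω‖} with hSdef
    have hS : MeasurableSet S := hmeasA _
    set A : ℕ → Set Ω := fun k => {ω | u ^ k * a n < ‖ξ ω‖} with hAdef
    have hAm : ∀ k, MeasurableSet (A k) := fun k => hmeasA _
    have hAsub : ∀ k, A k ⊆ S := by
      intro k ω hω
      exact lt_of_le_of_lt (le_mul_of_one_le_left (ha n).le (one_le_pow₀ hu1.le)) hω
    set c : ℕ → ℝ≥0∞ := fun k => ENNReal.ofReal ((v - 1) * v ^ k) with hcdef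
    set G : Ω → ℝ≥0∞ := fun ω => 1 + ∑' k, (A k).indicator (fun _ => c k) ω with hGdef
    have hGmeas : Measurable G := by
      rw [hGdef]; apply Measurable.const_add
      exact Measurable.ennreal_tsum (fun k => measurable_const.indicator (hAm k))
    -- pointwise bound
    have hpoint : ∀ ω ∈ S, ENNReal.ofReal ((‖ξ ω‖ / a n) ^ δ) ≤ G ω := by
      intro ω hω
      set Y : ℝ := ‖ξ ω‖ / a n with hYdef
      have hY : 1 < Y := (one_lt_div (ha n)).2 hω
      obtain ⟨m, hm1, hm2⟩ := aux_find12 u hu1 Y hY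
      have hYδ : Y ^ δ ≤ v ^ (m + 1) := by
        have h1 : Y ^ δ ≤ ((u ^ (m + 1) : ℝ)) ^ δ :=
          Real.rpow_le_rpow (by linarith) hm1 hδ.le
        have h2 : ((u ^ (m + 1) : ℝ)) ^ δ = v ^ (m + 1) := by
          rw [hvdef, ← Real.rpow_natCast u (m + 1), ← Real.rpow_mul hu0.le,
            mul_comm, Real.rpow_mul hu0.le, Real.rpow_natCast]
        linarith [h2 ▸ h1]
      have hsum : v ^ (m + 1) = 1 + ∑ k ∈ Finset.range (m + 1), (v - 1) * v ^ k := by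
        have h := geom_sum_mul v (m + 1)
        have h2 : ∑ k ∈ Finset.range (m + 1), (v - 1) * v ^ k
            = (∑ k ∈ Finset.range (m + 1), v ^ k) * (v - 1) :=
          by rw [Finset.sum_mul]; exact Finset.sum_congr rfl (fun _ _ => mul_comm _ _)
        rw [h2, h]; ring
      have hterm : ∀ k, 0 ≤ (v - 1) * v ^ k :=
        fun k => mul_nonneg (by linarith) (pow_nonneg hvpos.le k)
      calc ENNReal.ofReal (Y ^ δ) ≤ ENNReal.ofReal (v ^ (m + 1)) :=
            ENNReal.ofReal_le_ofReal hYδ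
      _ = 1 + ∑ k ∈ Finset.range (m + 1), c k := by
          rw [hsum, ENNReal.ofReal_add zero_le_one (Finset.sum_nonneg (fun k _ => hterm k)),
            ENNReal.ofReal_one, ENNReal.ofReal_sum_of_nonneg (fun k _ => hterm k)]
      _ = 1 + ∑ k ∈ Finset.range (m + 1), (A k).indicator (fun _ => c k) ω := by
          congr 1
          refine Finset.sum_congr rfl (fun k hk => ?_)
          have hkm : k ≤ m := Nat.lt_succ_iff.mp (Finset.mem_range.mp hk)
          have hωA : ω ∈ A k := by
            rw [hAdef]
            simp only [Set.mem_setOf_eq]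
            rw [← lt_div_iff₀ (ha n)]
            exact hm2 k hkm
          rw [Set.indicator_of_mem hωA]
      _ ≤ G ω := by
          rw [hGdef]
          exact add_le_add_right (ENNReal.sum_le_tsum _) 1
    -- integrate
    have hint : ∫⁻ ω in S, ENNReal.ofReal ((‖ξ ω‖ / a n) ^ δ) ∂P ≤ ∫⁻ ω in S, G ω ∂P :=
      setLIntegral_mono hGmeas hpoint
    have hGint : ∫⁻ ω in S, G ω ∂P = P S + ∑' k, c k * P (A k) := by
      rw [hGdef]
      rw [lintegral_add_left measurable_const]
      rw [setLIntegral_one]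
      congr 1
      rw [lintegral_tsum (fun k => (measurable_const.indicator (hAm k)).aemeasurable)]
      refine tsum_congr (fun k => ?_)
      rw [lintegral_indicator_const (hAm k), Measure.restrict_apply (hAm k),
        Set.inter_eq_self_of_subset_left (hAsub k)]
    -- bound the tsum
    have hPA : ∀ k, P (A k) ≤ ENNReal.ofReal (r0 ^ k * T (a n)) := by
      intro k
      have h1 : P (A k) = ENNReal.ofReal (T (u ^ k * a n)) :=
        (ENNReal.ofReal_toReal (measure_ne_top P _)).symm
      rw [h1]
      exact ENNReal.ofReal_le_ofReal (hiter k (a n) hXn)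
    have htsum : ∑' k, c k * P (A k) ≤ ENNReal.ofReal (T (a n) * ((v - 1) * (1 - w)⁻¹)) := by
      have step1 : ∑' k, c k * P (A k)
          ≤ ∑' k, ENNReal.ofReal ((v - 1) * T (a n) * w ^ k) := by
        refine ENNReal.tsum_le_tsum (fun k => ?_)
        calc c k * P (A k) ≤ ENNReal.ofReal ((v - 1) * v ^ k) * ENNReal.ofReal (r0 ^ k * T (a n)) :=
              mul_le_mul_right (hPA k) _
        _ = ENNReal.ofReal (((v - 1) * v ^ k) * (r0 ^ k * T (a n))) :=
              (ENNReal.ofReal_mul (mul_nonneg (by linarith) (pow_nonneg hvpos.le k))).symm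
        _ = ENNReal.ofReal ((v - 1) * T (a n) * w ^ k) := by
              congr 1
              rw [hwdef, mul_pow]
              ring
      have step2 : ∑' k, ENNReal.ofReal ((v - 1) * T (a n) * w ^ k)
          = ENNReal.ofReal ((v - 1) * T (a n)) * ∑' (k : ℕ), ENNReal.ofReal (w ^ k) := by
        rw [← ENNReal.tsum_mul_left]
        refine tsum_congr (fun k => ?_)
        rw [← ENNReal.ofReal_mul (mul_nonneg (by linarith) (hTnonneg _))]
      have step3 : ∑' (k : ℕ), ENNReal.ofReal (w ^ k) = ENNReal.ofReal ((1 - w)⁻¹) := by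
        have h1 : ∀ k : ℕ, ENNReal.ofReal (w ^ k) = (ENNReal.ofReal w) ^ k :=
          fun k => ENNReal.ofReal_pow hw0 k
        simp_rw [h1]
        rw [ENNReal.tsum_geometric]
        rw [ENNReal.ofReal_inv_of_pos h1w, ENNReal.ofReal_sub 1 hw0, ENNReal.ofReal_one]
      rw [step2, step3] at step1
      calc ∑' k, c k * P (A k)
          ≤ ENNReal.ofReal ((v - 1) * T (a n)) * ENNReal.ofReal ((1 - w)⁻¹) := step1
      _ = ENNReal.ofReal (T (a n) * ((v - 1) * (1 - w)⁻¹)) := by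
          rw [← ENNReal.ofReal_mul (mul_nonneg (by linarith) (hTnonneg _))]
          congr 1
          ring
    -- assemble
    have hPS : P S = ENNReal.ofReal (T (a n)) :=
      (ENNReal.ofReal_toReal (measure_ne_top P _)).symm
    have htotal : ∫⁻ ω in S, ENNReal.ofReal ((‖ξ ω‖ / a n) ^ δ) ∂P
        ≤ ENNReal.ofReal (T (a n) * B) := by
      calc ∫⁻ ω in S, ENNReal.ofReal ((‖ξ ω‖ / a n) ^ δ) ∂P
          ≤ P S + ∑' k, c k * P (A k) := hGint ▸ hint
      _ ≤ ENNReal.ofReal (T (a n)) + ENNReal.ofReal (T (a n) * ((v - 1) * (1 - w)⁻¹)) := by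
          rw [hPS]; exact add_le_add_right htsum _
      _ = ENNReal.ofReal (T (a n) * B) := by
          rw [← ENNReal.ofReal_add (hTnonneg _)
            (mul_nonneg (hTnonneg _) (mul_nonneg (by linarith) (by positivity)))]
          congr 1
          rw [hBdef]; ring
    calc (n : ℝ≥0∞) * ∫⁻ ω in S, ENNReal.ofReal ((‖ξ ω‖ / a n) ^ δ) ∂P
        ≤ (n : ℝ≥0∞) * ENNReal.ofReal (T (a n) * B) := mul_le_mul_right htotal _
    _ = ENNReal.ofReal (((n : ℝ) * T (a n)) * B) := by
        rw [← ENNReal.ofReal_natCast n, ← ENNReal.ofReal_mul (Nat.cast_nonneg n)]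
        congr 1
        ring
  -- limsup step
  have hev : ∀ᶠ n : ℕ in atTop, (n : ℝ≥0∞) *
      ∫⁻ ω in {ω | a n < ‖ξ ω‖}, ENNReal.ofReal ((‖ξ ω‖ / a n) ^ δ) ∂P
        ≤ ENNReal.ofReal (((n : ℝ) * T (a n)) * B) :=
    (ha_top.eventually_ge_atTop X₀).mono (fun n hn => key n hn)
  have hls : limsup (fun n : ℕ => (n : ℝ≥0∞) *
      ∫⁻ ω in {ω | a n < ‖ξ ω‖}, ENNReal.ofReal ((‖ξ ω‖ / a n) ^ δ) ∂P) atTop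
        ≤ limsup (fun n : ℕ => ENNReal.ofReal (((n : ℝ) * T (a n)) * B)) atTop :=
    limsup_le_limsup hev
  have htend : Tendsto (fun n : ℕ => ENNReal.ofReal (((n : ℝ) * T (a n)) * B)) atTop
      (nhds (ENNReal.ofReal (1 * B))) :=
    (ENNReal.continuous_ofReal.tendsto _).comp (hlim'.mul_const B)
  rw [htend.limsup_eq] at hls
  refine le_trans hls ?_
  rw [one_mul]
  calc ENNReal.ofReal B ≤ ENNReal.ofReal (α / (α - δ) + (η : ℝ)) :=
        ENNReal.ofReal_le_ofReal hBgu.le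
  _ = ENNReal.ofReal (α / (α - δ)) + ENNReal.ofReal (η : ℝ) :=
        ENNReal.ofReal_add (div_nonneg hα.le (by linarith)) (η.coe_nonneg)
  _ = ENNReal.ofReal (α / (α - δ)) + (η : ℝ≥0∞) := by rw [ENNReal.ofReal_coe_nnreal]

end
end

section
/- Let (Z_i)_{i∈ℤ} be a strictly stationary sequence of ℝ^d-valued random vectors whose norm is regularly varying with index α > 0 and which is pairwise asymptotically independent, i.e. lim_{x→∞} P(‖Z_i‖ > x, ‖Z_j‖ > x)/P(‖Z_1‖ > x) = 0 for all i ≠ j. Let (a_n) be positive reals with lim_{n→∞} n·P(‖Z_1‖ > a_n) = 1, and let D be an almost surely finite nonnegative random variable independent of (Z_i). Then for every integer m ≥ 1 and every c > 0, lim_{n→∞} P( ∃ k ∈ {1,…,n} and ∃ l ∈ {k−m,…,k+m} \ {k} such that D·‖Z_k‖ > c·a_n and D·‖Z_l‖ > c·a_n ) = 0. -/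
open MeasureTheory Filter

noncomputable section

/-- A sequence `(Z_i)_{i ∈ ℤ}` is strictly stationary. -/
def StrictlyStationary {Ω : Type*} [MeasurableSpace Ω] (P : Measure Ω) {E : Type*}
    [MeasurableSpace E] (Z : ℤ → Ω → E) : Prop :=
  ∀ (n : ℕ) (h : ℤ),
    Measure.map (fun ω => fun i : Fin n => Z (1 + (i : ℤ) + h) ω) P =
      Measure.map (fun ω => fun i : Fin n => Z (1 + (i : ℤ)) ω) P

/-- Auxiliary: pair stationarity for two coordinates at distance `j`. -/
lemma stat_pair {Ω : Type*} [MeasurableSpace Ω] (P : Measure Ω) {d : ℕ}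
    (Z : ℤ → Ω → (Fin d → ℝ)) (hZmeas : ∀ i, Measurable (Z i))
    (hstat : StrictlyStationary P Z) (x : ℝ) (b : ℤ) (j : ℕ) :
    P {ω | x < ‖Z b ω‖ ∧ x < ‖Z (b + (j:ℤ)) ω‖} =
    P {ω | x < ‖Z 1 ω‖ ∧ x < ‖Z (1 + (j:ℤ)) ω‖} := by
  set T : Set (Fin (j+1) → Fin d → ℝ) :=
    {v | x < ‖v 0‖ ∧ x < ‖v (Fin.last j)‖} with hT
  have hTm : MeasurableSet T := by
    apply MeasurableSet.inter
    · exact measurableSet_lt measurable_const ((measurable_pi_apply 0).norm)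
    · exact measurableSet_lt measurable_const ((measurable_pi_apply _).norm)
  have hFm : ∀ h : ℤ, Measurable (fun ω => fun i : Fin (j+1) => Z (1 + (i:ℤ) + h) ω) :=
    fun h => measurable_pi_lambda _ (fun i => hZmeas _)
  have hFm0 : Measurable (fun ω => fun i : Fin (j+1) => Z (1 + (i:ℤ)) ω) :=
    measurable_pi_lambda _ (fun i => hZmeas _)
  have hc0 : ((0 : Fin (j+1)) : ℤ) = 0 := by simp
  have hcl : ((Fin.last j : Fin (j+1)) : ℤ) = j := by simp [Fin.last]
  have hpre : ∀ h : ℤ, (fun ω => fun i : Fin (j+1) => Z (1 + (i:ℤ) + h) ω) ⁻¹' T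
      = {ω | x < ‖Z (1 + h) ω‖ ∧ x < ‖Z (1 + j + h) ω‖} := by
    intro h
    ext ω
    simp only [Set.mem_preimage, hT, Set.mem_setOf_eq, hc0, hcl]
    rw [add_zero]
  have hpre0 : (fun ω => fun i : Fin (j+1) => Z (1 + (i:ℤ)) ω) ⁻¹' T
      = {ω | x < ‖Z 1 ω‖ ∧ x < ‖Z (1 + j) ω‖} := by
    ext ω
    simp only [Set.mem_preimage, hT, Set.mem_setOf_eq, hc0, hcl]
    rw [add_zero]
  have e1 : P {ω | x < ‖Z b ω‖ ∧ x < ‖Z (b + (j:ℤ)) ω‖}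
      = Measure.map (fun ω => fun i : Fin (j+1) => Z (1 + (i:ℤ) + (b-1)) ω) P T := by
    rw [Measure.map_apply (hFm _) hTm, hpre]
    have i1 : (1:ℤ) + (b-1) = b := by ring
    have i2 : (1:ℤ) + (j:ℤ) + (b-1) = b + j := by ring
    rw [i1, i2]
  rw [e1, hstat (j+1) (b-1), Measure.map_apply hFm0 hTm, hpre0]

/-- For a pairwise asymptotically independent stationary regularly varying sequence and `D`
nonnegative independent of `(Z_i)`, the probability that two distinct nearby indices
`k, l` with `|l − k| ≤ m` both satisfy `D‖Z‖ > c a_n` tends to `0`. -/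
theorem stmt14 {Ω : Type*} [MeasurableSpace Ω] (P : Measure Ω) [IsProbabilityMeasure P]
    {d : ℕ} (Z : ℤ → Ω → (Fin d → ℝ)) (hZmeas : ∀ i, Measurable (Z i))
    (hstat : StrictlyStationary P Z)
    {α : ℝ} (hα : 0 < α) (hrv : RegVaryingNorm P (Z 1) α)
    (hpai : ∀ i j : ℤ, i ≠ j →
      Tendsto (fun x : ℝ =>
          (P {ω | x < ‖Z i ω‖ ∧ x < ‖Z j ω‖}).toReal / (P {ω | x < ‖Z 1 ω‖}).toReal)
        atTop (nhds 0))
    (a : ℕ → ℝ) (ha : ∀ n, 0 < a n)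
    (hlim : Tendsto (fun n : ℕ => (n : ℝ) * (P {ω | a n < ‖Z 1 ω‖}).toReal) atTop (nhds 1))
    (D : Ω → ℝ) (hDmeas : Measurable D) (hD0 : ∀ᵐ ω ∂P, 0 ≤ D ω)
    (hindep : ProbabilityTheory.Indep
      (MeasurableSpace.comap D inferInstance)
      (⨆ i : ℤ, MeasurableSpace.comap (Z i) inferInstance) P) :
    ∀ m : ℕ, 1 ≤ m → ∀ c : ℝ, 0 < c →
      Tendsto (fun n : ℕ =>
          (P {ω | ∃ k ∈ Finset.Icc (1 : ℤ) (n : ℤ),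
              ∃ l ∈ Finset.Icc (k - (m : ℤ)) (k + (m : ℤ)), l ≠ k ∧
              c * a n < D ω * ‖Z k ω‖ ∧ c * a n < D ω * ‖Z l ω‖}).toReal)
        atTop (nhds 0) := by
  intro m hm c hc
  have hp_pos : ∀ x : ℝ, 0 < x → 0 < (P {ω | x < ‖Z 1 ω‖}).toReal := hrv.1
  -- Step A: a n → ∞
  have hpa0 : Tendsto (fun n : ℕ => (P {ω | a n < ‖Z 1 ω‖}).toReal) atTop (nhds 0) := by
    have h1 : Tendsto (fun n : ℕ =>
        ((n:ℝ) * (P {ω | a n < ‖Z 1 ω‖}).toReal) * (n:ℝ)⁻¹) atTop (nhds (1 * 0)) :=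
      hlim.mul tendsto_inv_atTop_nhds_zero_nat
    rw [one_mul] at h1
    apply h1.congr'
    filter_upwards [eventually_ge_atTop 1] with n hn
    have hn0 : (n:ℝ) ≠ 0 := by positivity
    field_simp
  have ha_top : Tendsto a atTop atTop := by
    rw [tendsto_atTop]
    intro M
    have hM' : (0:ℝ) < max M 1 := lt_of_lt_of_le one_pos (le_max_right _ _)
    have hpM := hp_pos _ hM'
    filter_upwards [hpa0.eventually (gt_mem_nhds hpM)] with n hn
    by_contra hMn
    push_neg at hMn
    have hsub : {ω | max M 1 < ‖Z 1 ω‖} ⊆ {ω | a n < ‖Z 1 ω‖} :=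
      fun ω hω => (hMn.trans_le (le_max_left M 1)).trans hω
    have := ENNReal.toReal_mono (measure_ne_top P _) (measure_mono hsub)
    exact absurd this (not_le.mpr hn)
  -- Step: goal as epsilon statement
  rw [NormedAddCommGroup.tendsto_nhds_zero]
  intro ε hε
  -- choose s with P(D > s) small
  have hDtail : Tendsto (fun s : ℕ => (P {ω | (s:ℝ) < D ω}).toReal) atTop (nhds 0) := by
    have hmeas : ∀ s : ℕ, NullMeasurableSet {ω | (s:ℝ) < D ω} P :=
      fun s => (measurableSet_lt measurable_const hDmeas).nullMeasurableSet
    have hanti : Antitone (fun s : ℕ => {ω | (s:ℝ) < D ω}) := by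
      intro s t hst ω hω
      simp only [Set.mem_setOf_eq] at hω ⊢
      exact lt_of_le_of_lt ((Nat.cast_le (α := ℝ)).mpr hst) hω
    have h := MeasureTheory.tendsto_measure_iInter_atTop hmeas hanti ⟨0, measure_ne_top P _⟩
    have hempty : (⋂ s : ℕ, {ω | (s:ℝ) < D ω}) = ∅ := by
      ext ω
      simp only [Set.mem_iInter, Set.mem_setOf_eq, Set.mem_empty_iff_false, iff_false, not_forall, not_lt]
      obtain ⟨s, hs⟩ := exists_nat_ge (D ω)
      exact ⟨s, hs⟩
    rw [hempty, measure_empty] at h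
    have := (ENNReal.tendsto_toReal (by simp)).comp h
    simpa [Function.comp_def] using this
  obtain ⟨s, hs1, hsP⟩ : ∃ s : ℕ, 1 ≤ s ∧ (P {ω | (s:ℝ) < D ω}).toReal < ε / 2 := by
    have h2 := hDtail.eventually (gt_mem_nhds (half_pos hε))
    obtain ⟨s, hs⟩ := (h2.and (eventually_ge_atTop 1)).exists
    exact ⟨s, hs.2, hs.1⟩
  have hs0 : (0:ℝ) < (s:ℝ) := by exact_mod_cast hs1
  set u : ℝ := c / s with hu_def
  have hu : 0 < u := div_pos hc hs0
  -- Step B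
  have hx_top : Tendsto (fun n : ℕ => u * a n) atTop atTop := ha_top.const_mul_atTop hu
  have key : ∀ j : ℕ, 1 ≤ j →
      Tendsto (fun n : ℕ => (n:ℝ) *
        (P {ω | u * a n < ‖Z 1 ω‖ ∧ u * a n < ‖Z (1 + (j:ℤ)) ω‖}).toReal)
        atTop (nhds 0) := by
    intro j hj
    have h1 := (hpai 1 (1 + (j:ℤ)) (by omega)).comp hx_top
    have h2 := (hrv.2 u hu).comp ha_top
    simp only [Function.comp_def] at h1 h2
    have h4 := (h1.mul h2).mul hlim
    rw [zero_mul, zero_mul] at h4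
    refine h4.congr fun n => ?_
    have hpx : (P {ω | u * a n < ‖Z 1 ω‖}).toReal ≠ 0 := ne_of_gt (hp_pos _ (mul_pos hu (ha n)))
    have hpa2 : (P {ω | a n < ‖Z 1 ω‖}).toReal ≠ 0 := ne_of_gt (hp_pos _ (ha n))
    field_simp
  -- sum limit
  have hsum0 : Tendsto (fun n : ℕ => ((2*m+1 : ℕ):ℝ) * ∑ j ∈ Finset.Icc 1 m,
      (n:ℝ) * (P {ω | u * a n < ‖Z 1 ω‖ ∧ u * a n < ‖Z (1 + (j:ℤ)) ω‖}).toReal)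
      atTop (nhds 0) := by
    have h := tendsto_finset_sum (Finset.Icc 1 m)
      (fun j hj => key j (Finset.mem_Icc.mp hj).1)
    simp only [Finset.sum_const_zero] at h
    have := h.const_mul ((2*m+1 : ℕ):ℝ)
    simpa using this
  -- eventual bound
  have hev := hsum0.eventually (gt_mem_nhds (half_pos hε))
  filter_upwards [hev] with n hn
  -- inclusion
  set E : Set Ω := {ω | ∃ k ∈ Finset.Icc (1 : ℤ) (n : ℤ),
      ∃ l ∈ Finset.Icc (k - (m : ℤ)) (k + (m : ℤ)), l ≠ k ∧
      c * a n < D ω * ‖Z k ω‖ ∧ c * a n < D ω * ‖Z l ω‖} with hE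
  set U : Set Ω := ⋃ k ∈ Finset.Icc (1 : ℤ) (n : ℤ), ⋃ l ∈ Finset.Icc (k - (m:ℤ)) (k + (m:ℤ)),
      {ω | l ≠ k ∧ u * a n < ‖Z k ω‖ ∧ u * a n < ‖Z l ω‖} with hU
  have hconv : ∀ (i : ℤ) (ω : Ω), D ω ≤ s → c * a n < D ω * ‖Z i ω‖ → u * a n < ‖Z i ω‖ := by
    intro i ω hDs hlt
    have h2 : c * a n < (s:ℝ) * ‖Z i ω‖ :=
      lt_of_lt_of_le hlt (mul_le_mul_of_nonneg_right hDs (norm_nonneg _))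
    rw [hu_def, div_mul_eq_mul_div, div_lt_iff₀ hs0, mul_comm ‖Z i ω‖ (s:ℝ)] at *
    linarith
  have hEsub : E ⊆ {ω | (s:ℝ) < D ω} ∪ U := by
    intro ω hω
    obtain ⟨k, hk, l, hl, hne, h1, h2⟩ := hω
    by_cases hDs : (s:ℝ) < D ω
    · exact Or.inl hDs
    · push_neg at hDs
      refine Or.inr ?_
      rw [hU]
      simp only [Set.mem_iUnion, Set.mem_setOf_eq]
      exact ⟨k, hk, l, hl, hne, hconv k ω hDs h1, hconv l ω hDs h2⟩
  -- pair stationarity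
  have pair_eq : ∀ (k l : ℤ), l ≠ k →
      P {ω | u * a n < ‖Z k ω‖ ∧ u * a n < ‖Z l ω‖}
      = P {ω | u * a n < ‖Z 1 ω‖ ∧ u * a n < ‖Z (1 + (((l - k).natAbs : ℕ) : ℤ)) ω‖} := by
    intro k l hne
    rcases lt_or_gt_of_ne hne with h | h
    · have hidx : l + (((l - k).natAbs : ℕ) : ℤ) = k := by omega
      have hset : {ω | u * a n < ‖Z k ω‖ ∧ u * a n < ‖Z l ω‖}
          = {ω | u * a n < ‖Z l ω‖ ∧ u * a n < ‖Z (l + (((l - k).natAbs : ℕ) : ℤ)) ω‖} := by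
        rw [hidx]
        ext ω
        exact and_comm
      rw [hset, stat_pair P Z hZmeas hstat]
    · have hidx : k + (((l - k).natAbs : ℕ) : ℤ) = l := by omega
      have hset : {ω | u * a n < ‖Z k ω‖ ∧ u * a n < ‖Z l ω‖}
          = {ω | u * a n < ‖Z k ω‖ ∧ u * a n < ‖Z (k + (((l - k).natAbs : ℕ) : ℤ)) ω‖} := by
        rw [hidx]
      rw [hset, stat_pair P Z hZmeas hstat]
  -- measure bound on U
  set S : ENNReal := ∑ j ∈ Finset.Icc 1 m,
      P {ω | u * a n < ‖Z 1 ω‖ ∧ u * a n < ‖Z (1 + (j:ℤ)) ω‖} with hS_def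
  have hg : ∀ k l : ℤ, l ∈ Finset.Icc (k - (m:ℤ)) (k + (m:ℤ)) →
      P {ω | l ≠ k ∧ u * a n < ‖Z k ω‖ ∧ u * a n < ‖Z l ω‖} ≤ S := by
    intro k l hl
    by_cases hne : l = k
    · have : {ω : Ω | l ≠ k ∧ u * a n < ‖Z k ω‖ ∧ u * a n < ‖Z l ω‖} = ∅ := by
        ext ω; simp [hne]
      rw [this, measure_empty]
      exact zero_le
    · have hset : {ω : Ω | l ≠ k ∧ u * a n < ‖Z k ω‖ ∧ u * a n < ‖Z l ω‖}
          = {ω | u * a n < ‖Z k ω‖ ∧ u * a n < ‖Z l ω‖} := by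
        ext ω; simp [hne]
      rw [hset, pair_eq k l hne]
      have hmem : (l - k).natAbs ∈ Finset.Icc 1 m := by
        rw [Finset.mem_Icc] at hl ⊢
        omega
      rw [hS_def]
      exact Finset.single_le_sum
        (f := fun j : ℕ => P {ω | u * a n < ‖Z 1 ω‖ ∧ u * a n < ‖Z (1 + (j:ℤ)) ω‖})
        (fun j _ => zero_le) hmem
  have hUle : P U ≤ ((n * (2*m+1) : ℕ) : ENNReal) * S := by
    calc P U ≤ ∑ k ∈ Finset.Icc (1:ℤ) (n:ℤ),
          P (⋃ l ∈ Finset.Icc (k - (m:ℤ)) (k + (m:ℤ)),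
            {ω | l ≠ k ∧ u * a n < ‖Z k ω‖ ∧ u * a n < ‖Z l ω‖}) :=
        measure_biUnion_finset_le _ _
      _ ≤ ∑ k ∈ Finset.Icc (1:ℤ) (n:ℤ),
          ∑ l ∈ Finset.Icc (k - (m:ℤ)) (k + (m:ℤ)),
            P {ω | l ≠ k ∧ u * a n < ‖Z k ω‖ ∧ u * a n < ‖Z l ω‖} :=
        Finset.sum_le_sum fun k _ => measure_biUnion_finset_le _ _
      _ ≤ ∑ k ∈ Finset.Icc (1:ℤ) (n:ℤ),
          ∑ _l ∈ Finset.Icc (k - (m:ℤ)) (k + (m:ℤ)), S :=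
        Finset.sum_le_sum fun k _ => Finset.sum_le_sum fun l hl => hg k l hl
      _ = ((n * (2*m+1) : ℕ) : ENNReal) * S := by
        have hcard : ∀ k : ℤ, (Finset.Icc (k - (m:ℤ)) (k + (m:ℤ))).card = 2*m+1 := by
          intro k
          rw [Int.card_Icc]
          omega
        have hcardn : (Finset.Icc (1:ℤ) (n:ℤ)).card = n := by
          rw [Int.card_Icc]
          omega
        simp only [Finset.sum_const, hcard, hcardn, nsmul_eq_mul]
        push_cast
        ring
  -- finiteness
  have hSne : S ≠ ⊤ := by
    rw [hS_def]
    exact (ENNReal.sum_lt_top.mpr fun j _ => measure_lt_top P _).ne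
  have hRne : ((n * (2*m+1) : ℕ) : ENNReal) * S ≠ ⊤ :=
    ENNReal.mul_ne_top (ENNReal.natCast_ne_top _) hSne
  -- toReal bound for U
  have hUreal : (P U).toReal ≤ ((2*m+1 : ℕ) : ℝ) * ∑ j ∈ Finset.Icc 1 m,
      (n:ℝ) * (P {ω | u * a n < ‖Z 1 ω‖ ∧ u * a n < ‖Z (1 + (j:ℤ)) ω‖}).toReal := by
    have h2 := ENNReal.toReal_mono hRne hUle
    have hcast : (((n * (2*m+1) : ℕ)) : ENNReal).toReal = ((n * (2*m+1) : ℕ) : ℝ) := rfl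
    rw [ENNReal.toReal_mul, hcast, hS_def,
      ENNReal.toReal_sum (fun j _ => measure_ne_top P _)] at h2
    have h3 : ∑ j ∈ Finset.Icc 1 m, (n:ℝ) *
        (P {ω | u * a n < ‖Z 1 ω‖ ∧ u * a n < ‖Z (1 + (j:ℤ)) ω‖}).toReal
        = (n:ℝ) * ∑ j ∈ Finset.Icc 1 m,
          (P {ω | u * a n < ‖Z 1 ω‖ ∧ u * a n < ‖Z (1 + (j:ℤ)) ω‖}).toReal := by
      rw [Finset.mul_sum]
    rw [h3]
    calc (P U).toReal ≤ ((n * (2*m+1) : ℕ) : ℝ) * ∑ j ∈ Finset.Icc 1 m,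
          (P {ω | u * a n < ‖Z 1 ω‖ ∧ u * a n < ‖Z (1 + (j:ℤ)) ω‖}).toReal := h2
      _ = ((2*m+1 : ℕ) : ℝ) * ((n:ℝ) * ∑ j ∈ Finset.Icc 1 m,
          (P {ω | u * a n < ‖Z 1 ω‖ ∧ u * a n < ‖Z (1 + (j:ℤ)) ω‖}).toReal) := by
        push_cast
        ring
  -- final assembly
  have hPE : P E ≤ P {ω | (s:ℝ) < D ω} + P U :=
    le_trans (measure_mono hEsub) (measure_union_le _ _)
  have hPEreal : (P E).toReal ≤ (P {ω | (s:ℝ) < D ω}).toReal + (P U).toReal := by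
    have := ENNReal.toReal_mono
      (ENNReal.add_ne_top.mpr ⟨measure_ne_top P _, measure_ne_top P _⟩) hPE
    rwa [ENNReal.toReal_add (measure_ne_top P _) (measure_ne_top P _)] at this
  rw [Real.norm_eq_abs, abs_of_nonneg ENNReal.toReal_nonneg]
  calc (P E).toReal ≤ (P {ω | (s:ℝ) < D ω}).toReal + (P U).toReal := hPEreal
    _ < ε / 2 + ε / 2 := by
      apply add_lt_add_of_lt_of_le hsP
      exact le_trans hUreal hn.le
    _ = ε := add_halves ε

end
end

section
/- Let (Z_i)_{i∈ℤ} be a strictly stationary sequence of ℝ^d-valued random vectors whose norm is regularly varying with index α > 0 and whose components are asymptotically independent, i.e. for all j ≠ k in {1,…,d}, lim_{x→∞} P(|Z_1^{(j)}| > x, |Z_1^{(k)}| > x)/P(|Z_1^{(k)}| > x) = 0 (with the convention 0/0 = 0). Let (a_n) be positive reals with lim_{n→∞} n·P(‖Z_1‖ > a_n) = 1, and let D be an almost surely finite nonnegative random variable independent of (Z_i). Then for every c > 0, lim_{n→∞} P( ∃ k ∈ {1,…,n} and ∃ j ≠ p in {1,…,d} such that D·|Z_k^{(j)}| > c·a_n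 and D·|Z_k^{(p)}| > c·a_n ) = 0. -/
open MeasureTheory Filter

noncomputable section

lemma stmt15_stat_one {Ω : Type*} [MeasurableSpace Ω] (P : Measure Ω) {d : ℕ}
    (Z : ℤ → Ω → (Fin d → ℝ)) (hZmeas : ∀ i, Measurable (Z i))
    (hstat : StrictlyStationary P Z) (k : ℤ) {S : Set (Fin d → ℝ)}
    (hS : MeasurableSet S) : P (Z k ⁻¹' S) = P (Z 1 ⁻¹' S) := by
  have h := hstat 1 (k - 1)
  have hF : Measurable (fun ω => fun i : Fin 1 => Z (1 + (i : ℤ) + (k - 1)) ω) :=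
    measurable_pi_lambda _ fun i => hZmeas _
  have hG : Measurable (fun ω => fun i : Fin 1 => Z (1 + (i : ℤ)) ω) :=
    measurable_pi_lambda _ fun i => hZmeas _
  have hE : MeasurableSet ((fun f : Fin 1 → (Fin d → ℝ) => f 0) ⁻¹' S) :=
    (measurable_pi_apply 0) hS
  have h2 := congrArg (fun μ : Measure (Fin 1 → Fin d → ℝ) => μ ((fun f => f 0) ⁻¹' S)) h
  simp only [Measure.map_apply hF hE, Measure.map_apply hG hE] at h2
  have e1 : ((fun ω => fun i : Fin 1 => Z (1 + (i:ℤ) + (k-1)) ω) ⁻¹'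
      ((fun f : Fin 1 → Fin d → ℝ => f 0) ⁻¹' S)) = Z k ⁻¹' S := by
    ext ω
    simp only [Set.mem_preimage]
    norm_num
  have e2 : ((fun ω => fun i : Fin 1 => Z (1 + (i:ℤ)) ω) ⁻¹'
      ((fun f : Fin 1 → Fin d → ℝ => f 0) ⁻¹' S)) = Z 1 ⁻¹' S := by
    ext ω
    simp only [Set.mem_preimage]
    norm_num
  rw [e1, e2] at h2
  exact h2

lemma stmt15_aux_ineq {q r s N : ℝ} (hq : 0 ≤ q) (hqr : q ≤ r) (hrs : r ≤ s) (hN : 0 ≤ N) :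
    N * q ≤ (q / r) * (N * s) := by
  rcases eq_or_lt_of_le (hq.trans hqr) with h | h
  · have hq0 : q = 0 := le_antisymm (h ▸ hqr) hq
    simp [hq0]
  · have e : q / r * (N * s) = (q * N * s) / r := by ring
    rw [e, le_div_iff₀ h]
    nlinarith [mul_nonneg (mul_nonneg hN hq) (sub_nonneg.mpr hrs)]

lemma stmt15_key_pair {Ω : Type*} [MeasurableSpace Ω] (P : Measure Ω) [IsProbabilityMeasure P]
    {d : ℕ} (Z : ℤ → Ω → (Fin d → ℝ)) {α : ℝ}
    (a : ℕ → ℝ) (ha : ∀ n, 0 < a n) (haT : Tendsto a atTop atTop)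
    (hpos : ∀ x : ℝ, 0 < x → 0 < (P {ω | x < ‖Z 1 ω‖}).toReal)
    (hrv2 : ∀ u : ℝ, 0 < u →
      Tendsto (fun x : ℝ => (P {ω | u * x < ‖Z 1 ω‖}).toReal / (P {ω | x < ‖Z 1 ω‖}).toReal)
        atTop (nhds (u ^ (-α))))
    (hcai : ∀ j k : Fin d, j ≠ k →
      Tendsto (fun x : ℝ =>
          (P {ω | x < |Z 1 ω j| ∧ x < |Z 1 ω k|}).toReal / (P {ω | x < |Z 1 ω k|}).toReal)
        atTop (nhds 0))
    (hlim : Tendsto (fun n : ℕ => (n : ℝ) * (P {ω | a n < ‖Z 1 ω‖}).toReal) atTop (nhds 1))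
    (u : ℝ) (hu : 0 < u) (j p : Fin d) (hjp : j ≠ p) :
    Tendsto (fun n : ℕ =>
      (n : ℝ) * (P {ω | u * a n < |Z 1 ω j| ∧ u * a n < |Z 1 ω p|}).toReal)
      atTop (nhds 0) := by
  have huaT : Tendsto (fun n : ℕ => u * a n) atTop atTop := haT.const_mul_atTop hu
  have hns : Tendsto (fun n : ℕ => (n : ℝ) * (P {ω | u * a n < ‖Z 1 ω‖}).toReal)
      atTop (nhds (u ^ (-α))) := by
    have h1 : Tendsto (fun n : ℕ =>
        (P {ω | u * a n < ‖Z 1 ω‖}).toReal / (P {ω | a n < ‖Z 1 ω‖}).toReal)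
        atTop (nhds (u ^ (-α))) := (hrv2 u hu).comp haT
    have h2 := h1.mul hlim
    rw [mul_one] at h2
    refine h2.congr (fun n => ?_)
    have hsn : (P {ω | a n < ‖Z 1 ω‖}).toReal ≠ 0 := (hpos (a n) (ha n)).ne'
    field_simp
  have hqr : Tendsto (fun n : ℕ =>
      (P {ω | u * a n < |Z 1 ω j| ∧ u * a n < |Z 1 ω p|}).toReal /
        (P {ω | u * a n < |Z 1 ω p|}).toReal) atTop (nhds 0) := (hcai j p hjp).comp huaT
  have hprod := hqr.mul hns
  rw [zero_mul] at hprod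
  apply squeeze_zero (fun n => by positivity) (fun n => ?_) hprod
  refine stmt15_aux_ineq ENNReal.toReal_nonneg ?_ ?_ (Nat.cast_nonneg n)
  · exact ENNReal.toReal_mono (measure_ne_top _ _) (measure_mono (fun ω hω => hω.2))
  · refine ENNReal.toReal_mono (measure_ne_top _ _) (measure_mono (fun ω hω => ?_))
    exact lt_of_lt_of_le hω ((Real.norm_eq_abs _) ▸ norm_le_pi_norm (Z 1 ω) p)

/-- For a stationary regularly varying sequence with asymptotically independent components
and `D` nonnegative independent of `(Z_i)`, the probability that some `Z_k` (`1 ≤ k ≤ n`)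
has two distinct components `j ≠ p` with `D|Z_k^{(j)}| > c a_n` and `D|Z_k^{(p)}| > c a_n`
tends to `0`.  (Division by zero is `0` in Lean, matching the convention `0/0 = 0`.) -/
theorem stmt15 {Ω : Type*} [MeasurableSpace Ω] (P : Measure Ω) [IsProbabilityMeasure P]
    {d : ℕ} (Z : ℤ → Ω → (Fin d → ℝ)) (hZmeas : ∀ i, Measurable (Z i))
    (hstat : StrictlyStationary P Z)
    {α : ℝ} (hα : 0 < α) (hrv : RegVaryingNorm P (Z 1) α)
    (hcai : ∀ j k : Fin d, j ≠ k →
      Tendsto (fun x : ℝ =>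
          (P {ω | x < |Z 1 ω j| ∧ x < |Z 1 ω k|}).toReal / (P {ω | x < |Z 1 ω k|}).toReal)
        atTop (nhds 0))
    (a : ℕ → ℝ) (ha : ∀ n, 0 < a n)
    (hlim : Tendsto (fun n : ℕ => (n : ℝ) * (P {ω | a n < ‖Z 1 ω‖}).toReal) atTop (nhds 1))
    (D : Ω → ℝ) (hDmeas : Measurable D) (hD0 : ∀ᵐ ω ∂P, 0 ≤ D ω)
    (hindep : ProbabilityTheory.Indep
      (MeasurableSpace.comap D inferInstance)
      (⨆ i : ℤ, MeasurableSpace.comap (Z i) inferInstance) P) :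
    ∀ c : ℝ, 0 < c →
      Tendsto (fun n : ℕ =>
          (P {ω | ∃ k ∈ Finset.Icc (1 : ℤ) (n : ℤ), ∃ j p : Fin d, j ≠ p ∧
              c * a n < D ω * |Z k ω j| ∧ c * a n < D ω * |Z k ω p|}).toReal)
        atTop (nhds 0) := by
  obtain ⟨hpos, hrv2⟩ := hrv
  intro c hc
  -- a n → ∞
  have hs0 : Tendsto (fun n : ℕ => (P {ω | a n < ‖Z 1 ω‖}).toReal) atTop (nhds 0) := by
    have h1 : Tendsto (fun n : ℕ => ((n : ℝ) * (P {ω | a n < ‖Z 1 ω‖}).toReal) * (n : ℝ)⁻¹)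
        atTop (nhds (1 * 0)) := hlim.mul tendsto_inv_atTop_nhds_zero_nat
    rw [one_mul] at h1
    refine h1.congr' ?_
    filter_upwards [eventually_ge_atTop 1] with n hn
    have : (n : ℝ) ≠ 0 := by positivity
    field_simp
  have haT : Tendsto a atTop atTop := by
    rw [tendsto_atTop]
    intro B
    by_contra h
    have hfreq : ∃ᶠ n in atTop, a n < B := by
      simpa [not_le] using (not_eventually.mp h)
    set B' := max B 1 with hB'
    have hB'pos : 0 < (P {ω | B' < ‖Z 1 ω‖}).toReal :=
      hpos B' (lt_of_lt_of_le one_pos (le_max_right _ _))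
    have hev : ∀ᶠ n in atTop,
        (P {ω | a n < ‖Z 1 ω‖}).toReal < (P {ω | B' < ‖Z 1 ω‖}).toReal :=
      hs0.eventually_lt_const hB'pos
    obtain ⟨n, hn1, hn2⟩ := (hfreq.and_eventually hev).exists
    have hmono : (P {ω | B' < ‖Z 1 ω‖}).toReal ≤ (P {ω | a n < ‖Z 1 ω‖}).toReal := by
      apply ENNReal.toReal_mono (measure_ne_top _ _)
      apply measure_mono
      intro ω hω
      exact lt_trans (lt_of_lt_of_le hn1 (le_max_left _ _)) hω
    linarith
  rw [NormedAddCommGroup.tendsto_nhds_zero]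
  intro ε hε
  -- choose a bound M for D
  have hDten : Tendsto (fun m : ℕ => (P {ω | (m : ℝ) < D ω}).toReal) atTop (nhds 0) := by
    have h1 : Tendsto (fun m : ℕ => P {ω | (m : ℝ) < D ω}) atTop
        (nhds (P (⋂ m : ℕ, {ω | (m : ℝ) < D ω}))) := by
      apply tendsto_measure_iInter_atTop
      · exact fun m => (measurableSet_lt measurable_const hDmeas).nullMeasurableSet
      · intro m m' hmm' ω hω
        exact lt_of_le_of_lt (show (m:ℝ) ≤ (m':ℝ) by exact_mod_cast hmm') hω
      · exact ⟨0, measure_ne_top _ _⟩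
    have hempty : (⋂ m : ℕ, {ω | (m : ℝ) < D ω}) = ∅ := by
      ext ω
      simp only [Set.mem_iInter, Set.mem_setOf_eq, Set.mem_empty_iff_false, iff_false, not_forall,
        not_lt]
      obtain ⟨m, hm⟩ := exists_nat_gt (D ω)
      exact ⟨m, hm.le⟩
    rw [hempty, measure_empty] at h1
    have h2 := (ENNReal.tendsto_toReal (by simp : (0 : ENNReal) ≠ ⊤)).comp h1
    simpa [Function.comp_def] using h2
  obtain ⟨m, hm⟩ := (hDten.eventually_lt_const (half_pos hε)).exists
  set M : ℝ := (m : ℝ) + 1 with hMdef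
  have hM : 0 < M := by positivity
  have hPA : (P {ω | M < D ω}).toReal < ε / 2 := by
    refine lt_of_le_of_lt ?_ hm
    apply ENNReal.toReal_mono (measure_ne_top _ _)
    apply measure_mono
    intro ω hω
    have : (m : ℝ) < M := by simp [hMdef]
    exact this.trans hω
  set u : ℝ := c / M with hudef
  have hu : 0 < u := div_pos hc hM
  -- the sum over pairs tends to 0
  set OD := (Finset.univ : Finset (Fin d)).offDiag with hOD
  have hsum : Tendsto (fun n : ℕ => ∑ jp ∈ OD,
      (n : ℝ) * (P {ω | u * a n < |Z 1 ω jp.1| ∧ u * a n < |Z 1 ω jp.2|}).toReal)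
      atTop (nhds 0) := by
    have := tendsto_finset_sum OD (fun jp (hjp : jp ∈ OD) =>
      stmt15_key_pair P Z a ha haT hpos hrv2 hcai hlim u hu jp.1 jp.2
        (Finset.mem_offDiag.mp hjp).2.2)
    simpa using this
  filter_upwards [hsum.eventually_lt_const (half_pos hε)] with n hg
  -- the main bound
  set Sn : Set (Fin d → ℝ) :=
    ⋃ jp ∈ OD, {v : Fin d → ℝ | u * a n < |v jp.1| ∧ u * a n < |v jp.2|} with hSn
  have hSnmeas : MeasurableSet Sn := by
    apply Finset.measurableSet_biUnion
    intro jp _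
    exact (measurableSet_lt measurable_const (measurable_pi_apply jp.1).abs).inter
      (measurableSet_lt measurable_const (measurable_pi_apply jp.2).abs)
  set E : Set Ω := {ω | ∃ k ∈ Finset.Icc (1 : ℤ) (n : ℤ), ∃ j p : Fin d, j ≠ p ∧
      c * a n < D ω * |Z k ω j| ∧ c * a n < D ω * |Z k ω p|} with hEdef
  set A : Set Ω := {ω | M < D ω} with hAdef
  set U : Set Ω := ⋃ k ∈ Finset.Icc (1 : ℤ) (n : ℤ), Z k ⁻¹' Sn with hUdef
  have habs : ∀ (k : ℤ) (j : Fin d) ω, D ω ≤ M → c * a n < D ω * |Z k ω j| →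
      u * a n < |Z k ω j| := by
    intro k j ω hDM hlt
    have h1 : D ω * |Z k ω j| ≤ M * |Z k ω j| :=
      mul_le_mul_of_nonneg_right hDM (abs_nonneg _)
    have h2 : c * a n < M * |Z k ω j| := lt_of_lt_of_le hlt h1
    rw [hudef, div_mul_eq_mul_div, div_lt_iff₀ hM]
    linarith [h2, mul_comm M (|Z k ω j|)]
  have hsub : E ⊆ (A ∪ U) ∪ {ω | D ω < 0} := by
    intro ω hω
    obtain ⟨k, hk, j, p, hjp, h1, h2⟩ := hω
    by_cases hneg : D ω < 0
    · exact Or.inr hneg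
    push_neg at hneg
    left
    by_cases hDM : M < D ω
    · exact Or.inl hDM
    push_neg at hDM
    right
    refine Set.mem_biUnion hk ?_
    show Z k ω ∈ Sn
    refine Set.mem_biUnion (show (j, p) ∈ OD from Finset.mem_offDiag.mpr
      ⟨Finset.mem_univ _, Finset.mem_univ _, hjp⟩) ?_
    exact ⟨habs k j ω hDM h1, habs k p ω hDM h2⟩
  have hneg0 : P {ω | D ω < 0} = 0 := by
    have := ae_iff.mp hD0
    simpa [not_le] using this
  have hstep1 : P E ≤ P A + P U := by
    calc P E ≤ P ((A ∪ U) ∪ {ω | D ω < 0}) := measure_mono hsub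
      _ ≤ P (A ∪ U) + P {ω | D ω < 0} := measure_union_le _ _
      _ = P (A ∪ U) := by rw [hneg0, add_zero]
      _ ≤ P A + P U := measure_union_le _ _
  have hstep2 : (P E).toReal ≤ (P A).toReal + (P U).toReal := by
    have h1 : (P E).toReal ≤ (P A + P U).toReal :=
      ENNReal.toReal_mono (ENNReal.add_ne_top.mpr ⟨measure_ne_top _ _, measure_ne_top _ _⟩) hstep1
    rwa [ENNReal.toReal_add (measure_ne_top _ _) (measure_ne_top _ _)] at h1
  have hstep3 : (P U).toReal ≤ (n : ℝ) * (P (Z 1 ⁻¹' Sn)).toReal := by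
    have h1 : P U ≤ ∑ k ∈ Finset.Icc (1 : ℤ) (n : ℤ), P (Z k ⁻¹' Sn) :=
      measure_biUnion_finset_le _ _
    have h2 : (P U).toReal ≤ (∑ k ∈ Finset.Icc (1 : ℤ) (n : ℤ), P (Z k ⁻¹' Sn)).toReal :=
      ENNReal.toReal_mono (by
        refine (ENNReal.sum_lt_top.mpr fun k _ => measure_lt_top _ _).ne) h1
    rw [ENNReal.toReal_sum (fun k _ => measure_ne_top _ _)] at h2
    refine h2.trans_eq ?_
    have h3 : ∀ k ∈ Finset.Icc (1 : ℤ) (n : ℤ), (P (Z k ⁻¹' Sn)).toReal =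
        (P (Z 1 ⁻¹' Sn)).toReal := fun k _ => by
      rw [stmt15_stat_one P Z hZmeas hstat k hSnmeas]
    rw [Finset.sum_congr rfl h3, Finset.sum_const]
    have hcard : (Finset.Icc (1 : ℤ) (n : ℤ)).card = n := by
      rw [Int.card_Icc]
      simp
    rw [hcard]
    simp [nsmul_eq_mul]
  have hstep4 : (P (Z 1 ⁻¹' Sn)).toReal ≤
      ∑ jp ∈ OD, (P {ω | u * a n < |Z 1 ω jp.1| ∧ u * a n < |Z 1 ω jp.2|}).toReal := by
    have h1 : Z 1 ⁻¹' Sn =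
        ⋃ jp ∈ OD, {ω | u * a n < |Z 1 ω jp.1| ∧ u * a n < |Z 1 ω jp.2|} := by
      rw [hSn]
      ext ω
      simp [Set.mem_iUnion]
    rw [h1]
    have h2 := measure_biUnion_finset_le (μ := P) OD
      (fun jp => {ω | u * a n < |Z 1 ω jp.1| ∧ u * a n < |Z 1 ω jp.2|})
    have h3 := ENNReal.toReal_mono (by
      refine (ENNReal.sum_lt_top.mpr fun jp _ => measure_lt_top _ _).ne) h2
    rwa [ENNReal.toReal_sum (fun jp _ => measure_ne_top _ _)] at h3
  have hfinal : (P E).toReal < ε := by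
    have h5 : (n : ℝ) * (P (Z 1 ⁻¹' Sn)).toReal ≤ ∑ jp ∈ OD,
        (n : ℝ) * (P {ω | u * a n < |Z 1 ω jp.1| ∧ u * a n < |Z 1 ω jp.2|}).toReal := by
      rw [← Finset.mul_sum]
      exact mul_le_mul_of_nonneg_left hstep4 (Nat.cast_nonneg n)
    calc (P E).toReal ≤ (P A).toReal + (P U).toReal := hstep2
      _ ≤ (P A).toReal + (n : ℝ) * (P (Z 1 ⁻¹' Sn)).toReal := by linarith
      _ ≤ (P A).toReal + ∑ jp ∈ OD,
          (n : ℝ) * (P {ω | u * a n < |Z 1 ω jp.1| ∧ u * a n < |Z 1 ω jp.2|}).toReal := by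
        linarith
      _ < ε / 2 + ε / 2 := by exact add_lt_add hPA hg
      _ = ε := by ring
  rw [Real.norm_eq_abs, abs_of_nonneg ENNReal.toReal_nonneg]
  exact hfinal

end
end

section
/- Let (Z_i)_{i∈ℤ} be a strictly stationary sequence of ℝ^d-valued random vectors whose norm is regularly varying with index α > 0, which is pairwise asymptotically independent, i.e. lim_{x→∞} P(‖Z_i‖ > x, ‖Z_j‖ > x)/P(‖Z_1‖ > x) = 0 for all i ≠ j, and whose components are asymptotically independent, i.e. for all j ≠ k in {1,…,d}, lim_{x→∞} P(|Z_1^{(j)}| > x, |Z_1^{(k)}| > x)/P(|Z_1^{(k)}| > x) = 0 (with the convention 0/0 = 0). Let (a_n) be positive reals with lim_{n→∞} n·P(‖Z_1‖ > a_n) = 1, and let D be an almost surely finite nonnegative random variable independent of (Z_i). Then for every integer m ≥ 0 and every c > 0, lim_{n→∞} P( ∃ j ∈ {1,…,n}, ∃ l₁, l₂ ∈ {0,…,m} and ∃ s₁, s₂ ∈ {1,…,d} with (l₁,s₁) ≠ (l₂,s₂) such that D·|Z_{j−l₁}^{(s₁)}| > c·a_n and D·|Z_{j−l₂}^{(s₂)}|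 > c·a_n ) = 0. -/
open MeasureTheory Filter

noncomputable section

lemma shift_pair {Ω : Type*} [MeasurableSpace Ω] (P : Measure Ω)
    {d : ℕ} (Z : ℤ → Ω → (Fin d → ℝ)) (hZmeas : ∀ i, Measurable (Z i))
    (hstat : StrictlyStationary P Z)
    {B1 B2 : Set (Fin d → ℝ)} (hB1 : MeasurableSet B1) (hB2 : MeasurableSet B2)
    {i1 i2 : ℤ} (h12 : i1 ≤ i2) :
    P {ω | Z i1 ω ∈ B1 ∧ Z i2 ω ∈ B2} =
      P {ω | Z 1 ω ∈ B1 ∧ Z (1 + (i2 - i1)) ω ∈ B2} := by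
  set k := (i2 - i1).toNat with hkdef
  have hk : (k : ℤ) = i2 - i1 := Int.toNat_of_nonneg (sub_nonneg.2 h12)
  set A : Set (Fin (k+1) → Fin d → ℝ) :=
    ((fun v => v 0) ⁻¹' B1) ∩ ((fun v => v (Fin.last k)) ⁻¹' B2) with hA
  have hAm : MeasurableSet A :=
    (hB1.preimage (measurable_pi_apply 0)).inter (hB2.preimage (measurable_pi_apply _))
  have hΦ : ∀ h : ℤ, Measurable (fun ω => fun i : Fin (k+1) => Z (1 + (i : ℤ) + h) ω) :=
    fun h => measurable_pi_lambda _ (fun i => hZmeas _)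
  have hΦ0 : Measurable (fun ω => fun i : Fin (k+1) => Z (1 + (i : ℤ)) ω) :=
    measurable_pi_lambda _ (fun i => hZmeas _)
  have e1 : {ω | Z i1 ω ∈ B1 ∧ Z i2 ω ∈ B2} =
      (fun ω => fun i : Fin (k+1) => Z (1 + (i : ℤ) + (i1 - 1)) ω) ⁻¹' A := by
    ext ω
    simp only [hA, Set.mem_preimage, Set.mem_inter_iff, Set.mem_setOf_eq,
      Fin.val_zero, Fin.val_last, Int.ofNat_zero]
    rw [show (1 + 0 + (i1 - 1) : ℤ) = i1 by ring,
      show (1 + (k : ℤ) + (i1 - 1)) = i2 by omega]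
  have e2 : {ω | Z 1 ω ∈ B1 ∧ Z (1 + (i2 - i1)) ω ∈ B2} =
      (fun ω => fun i : Fin (k+1) => Z (1 + (i : ℤ)) ω) ⁻¹' A := by
    ext ω
    simp only [hA, Set.mem_preimage, Set.mem_inter_iff, Set.mem_setOf_eq,
      Fin.val_zero, Fin.val_last]
    rw [show (1 + ((0:ℕ) : ℤ)) = 1 by simp,
      show (1 + (k : ℤ)) = 1 + (i2 - i1) by omega]
  rw [e1, e2, ← Measure.map_apply (hΦ _) hAm, ← Measure.map_apply hΦ0 hAm,
    hstat (k+1) (i1 - 1)]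

lemma shift_pair_any {Ω : Type*} [MeasurableSpace Ω] (P : Measure Ω)
    {d : ℕ} (Z : ℤ → Ω → (Fin d → ℝ)) (hZmeas : ∀ i, Measurable (Z i))
    (hstat : StrictlyStationary P Z)
    {B1 B2 : Set (Fin d → ℝ)} (hB1 : MeasurableSet B1) (hB2 : MeasurableSet B2)
    (i1 i2 j : ℤ) :
    P {ω | Z (j + i1) ω ∈ B1 ∧ Z (j + i2) ω ∈ B2} =
      P {ω | Z i1 ω ∈ B1 ∧ Z i2 ω ∈ B2} := by
  rcases le_total i1 i2 with h | h
  · rw [shift_pair P Z hZmeas hstat hB1 hB2 (by omega : j + i1 ≤ j + i2),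
      shift_pair P Z hZmeas hstat hB1 hB2 h,
      show j + i2 - (j + i1) = i2 - i1 by ring]
  · have c1 : {ω | Z (j + i1) ω ∈ B1 ∧ Z (j + i2) ω ∈ B2} =
        {ω | Z (j + i2) ω ∈ B2 ∧ Z (j + i1) ω ∈ B1} := by
      ext ω; exact and_comm
    have c2 : {ω | Z i1 ω ∈ B1 ∧ Z i2 ω ∈ B2} =
        {ω | Z i2 ω ∈ B2 ∧ Z i1 ω ∈ B1} := by
      ext ω; exact and_comm
    rw [c1, c2, shift_pair P Z hZmeas hstat hB2 hB1 (by omega : j + i2 ≤ j + i1),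
      shift_pair P Z hZmeas hstat hB2 hB1 h,
      show j + i1 - (j + i2) = i1 - i2 by ring]
lemma det_core {Ω : Type*} [MeasurableSpace Ω] (P : Measure Ω) [IsProbabilityMeasure P]
    {d : ℕ} (Z : ℤ → Ω → (Fin d → ℝ)) (hZmeas : ∀ i, Measurable (Z i))
    (hstat : StrictlyStationary P Z)
    {α : ℝ} (hrv : RegVaryingNorm P (Z 1) α)
    (hpai : ∀ i j : ℤ, i ≠ j →
      Tendsto (fun x : ℝ =>
          (P {ω | x < ‖Z i ω‖ ∧ x < ‖Z j ω‖}).toReal / (P {ω | x < ‖Z 1 ω‖}).toReal)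
        atTop (nhds 0))
    (hcai : ∀ j k : Fin d, j ≠ k →
      Tendsto (fun x : ℝ =>
          (P {ω | x < |Z 1 ω j| ∧ x < |Z 1 ω k|}).toReal / (P {ω | x < |Z 1 ω k|}).toReal)
        atTop (nhds 0))
    (a : ℕ → ℝ) (ha : ∀ n, 0 < a n)
    (hlim : Tendsto (fun n : ℕ => (n : ℝ) * (P {ω | a n < ‖Z 1 ω‖}).toReal) atTop (nhds 1))
    (haT : Tendsto a atTop atTop)
    (m : ℕ) (c' : ℝ) (hc' : 0 < c') :
    Tendsto (fun n : ℕ =>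
        (P {ω | ∃ j ∈ Finset.Icc (1 : ℤ) (n : ℤ), ∃ l₁ ∈ Finset.Icc 0 m,
            ∃ l₂ ∈ Finset.Icc 0 m, ∃ s₁ s₂ : Fin d, ((l₁, s₁) ≠ (l₂, s₂)) ∧
            c' * a n < |Z (j - (l₁ : ℤ)) ω s₁| ∧
            c' * a n < |Z (j - (l₂ : ℤ)) ω s₂|}).toReal)
      atTop (nhds 0) := by
  classical
  set pN : ℝ → ℝ := fun x => (P {ω | x < ‖Z 1 ω‖}).toReal with hpN
  -- B sets
  have hBm : ∀ s : Fin d, ∀ x : ℝ, MeasurableSet {v : Fin d → ℝ | x < |v s|} := by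
    intro s x
    exact measurableSet_lt measurable_const ((measurable_pi_apply s).abs)
  -- tuple type
  set T := Fin (m+1) × Fin (m+1) × Fin d × Fin d with hT
  set Q : T → ℕ → ENNReal := fun t n =>
    if (((t.1 : ℕ), t.2.2.1) : ℕ × Fin d) ≠ ((t.2.1 : ℕ), t.2.2.2) then
      P {ω | c' * a n < |Z (-(t.1 : ℕ) : ℤ) ω t.2.2.1| ∧
             c' * a n < |Z (-(t.2.1 : ℕ) : ℤ) ω t.2.2.2|}
    else 0 with hQ
  have hQfin : ∀ t n, Q t n ≠ ⊤ := by
    intro t n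
    simp only [hQ]
    split
    · exact measure_ne_top P _
    · exact ENNReal.zero_ne_top
  -- union bound
  have hbound : ∀ n : ℕ,
      (P {ω | ∃ j ∈ Finset.Icc (1 : ℤ) (n : ℤ), ∃ l₁ ∈ Finset.Icc 0 m,
          ∃ l₂ ∈ Finset.Icc 0 m, ∃ s₁ s₂ : Fin d, ((l₁, s₁) ≠ (l₂, s₂)) ∧
          c' * a n < |Z (j - (l₁ : ℤ)) ω s₁| ∧
          c' * a n < |Z (j - (l₂ : ℤ)) ω s₂|}) ≤ (n : ENNReal) * ∑ t : T, Q t n := by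
    intro n
    set F : ℤ → T → Set Ω := fun j t =>
      if (((t.1 : ℕ), t.2.2.1) : ℕ × Fin d) ≠ ((t.2.1 : ℕ), t.2.2.2) then
        {ω | c' * a n < |Z (j - (t.1 : ℕ) : ℤ) ω t.2.2.1| ∧
             c' * a n < |Z (j - (t.2.1 : ℕ) : ℤ) ω t.2.2.2|}
      else ∅ with hF
    have hsubset : {ω | ∃ j ∈ Finset.Icc (1 : ℤ) (n : ℤ), ∃ l₁ ∈ Finset.Icc 0 m,
        ∃ l₂ ∈ Finset.Icc 0 m, ∃ s₁ s₂ : Fin d, ((l₁, s₁) ≠ (l₂, s₂)) ∧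
        c' * a n < |Z (j - (l₁ : ℤ)) ω s₁| ∧
        c' * a n < |Z (j - (l₂ : ℤ)) ω s₂|} ⊆
        ⋃ j ∈ Finset.Icc (1 : ℤ) (n : ℤ), ⋃ t : T, F j t := by
      rintro ω ⟨j, hj, l₁, hl₁, l₂, hl₂, s₁, s₂, hne, h1, h2⟩
      simp only [Finset.mem_Icc] at hl₁ hl₂
      refine Set.mem_biUnion hj ?_
      refine Set.mem_iUnion.2 ⟨(⟨l₁, by omega⟩, ⟨l₂, by omega⟩, s₁, s₂), ?_⟩
      have hne' : (((⟨l₁, by omega⟩ : Fin (m+1)) : ℕ), s₁) ≠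
          (((⟨l₂, by omega⟩ : Fin (m+1)) : ℕ), s₂) := by
        simpa using hne
      simp only [hF, if_pos hne']
      exact ⟨h1, h2⟩
    have hQeq : ∀ j : ℤ, ∀ t : T, P (F j t) = Q t n := by
      intro j t
      obtain ⟨l₁, l₂, s₁, s₂⟩ := t
      by_cases hne : (((l₁ : ℕ), s₁) : ℕ × Fin d) ≠ ((l₂ : ℕ), s₂)
      · simp only [hF, hQ, if_pos hne]
        have e1 : {ω | c' * a n < |Z (j - (l₁ : ℕ) : ℤ) ω s₁| ∧
            c' * a n < |Z (j - (l₂ : ℕ) : ℤ) ω s₂|} =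
            {ω | Z (j + (-(l₁ : ℕ) : ℤ)) ω ∈ {v : Fin d → ℝ | c' * a n < |v s₁|} ∧
                 Z (j + (-(l₂ : ℕ) : ℤ)) ω ∈ {v : Fin d → ℝ | c' * a n < |v s₂|}} := by
          ext ω
          rw [show (j + (-(l₁ : ℕ) : ℤ)) = j - (l₁ : ℕ) by ring,
            show (j + (-(l₂ : ℕ) : ℤ)) = j - (l₂ : ℕ) by ring]
          rfl
        rw [e1, shift_pair_any P Z hZmeas hstat (hBm s₁ _) (hBm s₂ _)]
        rfl
      · simp only [hF, hQ, if_neg hne, measure_empty]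
    calc P _ ≤ ∑ j ∈ Finset.Icc (1 : ℤ) (n : ℤ), P (⋃ t : T, F j t) :=
          le_trans (measure_mono hsubset) (measure_biUnion_finset_le _ _)
      _ ≤ ∑ j ∈ Finset.Icc (1 : ℤ) (n : ℤ), ∑ t : T, P (F j t) := by
          refine Finset.sum_le_sum fun j _ => ?_
          exact le_trans (measure_iUnion_le _) (le_of_eq (tsum_fintype _))
      _ = ∑ j ∈ Finset.Icc (1 : ℤ) (n : ℤ), ∑ t : T, Q t n := by
          refine Finset.sum_congr rfl fun j _ => Finset.sum_congr rfl fun t _ => hQeq j t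
      _ = (n : ENNReal) * ∑ t : T, Q t n := by
          rw [Finset.sum_const, Int.card_Icc]
          simp [nsmul_eq_mul]
  -- real bound
  have hreal : ∀ n : ℕ,
      (P {ω | ∃ j ∈ Finset.Icc (1 : ℤ) (n : ℤ), ∃ l₁ ∈ Finset.Icc 0 m,
          ∃ l₂ ∈ Finset.Icc 0 m, ∃ s₁ s₂ : Fin d, ((l₁, s₁) ≠ (l₂, s₂)) ∧
          c' * a n < |Z (j - (l₁ : ℤ)) ω s₁| ∧
          c' * a n < |Z (j - (l₂ : ℤ)) ω s₂|}).toReal ≤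
        ∑ t : T, ((n : ℝ) * (Q t n).toReal) := by
    intro n
    have h1 : ((n : ENNReal) * ∑ t : T, Q t n) ≠ ⊤ := by
      refine ENNReal.mul_ne_top (ENNReal.natCast_ne_top n) ?_
      exact (ENNReal.sum_lt_top.2 fun t _ => (hQfin t n).lt_top).ne
    calc (P _).toReal ≤ ((n : ENNReal) * ∑ t : T, Q t n).toReal :=
          ENNReal.toReal_mono h1 (hbound n)
      _ = ∑ t : T, ((n : ℝ) * (Q t n).toReal) := by
          rw [ENNReal.toReal_mul, ENNReal.toReal_sum (fun t _ => hQfin t n), Finset.mul_sum]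
          simp
  -- per tuple limits
  have htuple : ∀ t : T, Tendsto (fun n : ℕ => (n : ℝ) * (Q t n).toReal) atTop (nhds 0) := by
    intro t
    obtain ⟨l₁, l₂, s₁, s₂⟩ := t
    by_cases hne : (((l₁ : ℕ), s₁) : ℕ × Fin d) ≠ ((l₂ : ℕ), s₂)
    · -- ratio tendsto
      have hratio : Tendsto (fun x : ℝ =>
          (P {ω | x < |Z (-(l₁ : ℕ) : ℤ) ω s₁| ∧ x < |Z (-(l₂ : ℕ) : ℤ) ω s₂|}).toReal / pN x)
          atTop (nhds 0) := by
        by_cases hl : (l₁ : ℕ) = (l₂ : ℕ)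
        · -- same index, different components
          have hs : s₁ ≠ s₂ := by
            intro h; exact hne (by rw [hl, h])
          have heq : ∀ x : ℝ,
              P {ω | x < |Z (-(l₁ : ℕ) : ℤ) ω s₁| ∧ x < |Z (-(l₂ : ℕ) : ℤ) ω s₂|} =
              P {ω | x < |Z 1 ω s₁| ∧ x < |Z 1 ω s₂|} := by
            intro x
            have := shift_pair P Z hZmeas hstat (hBm s₁ x) (hBm s₂ x)
              (le_refl (-(l₁ : ℕ) : ℤ))
            rw [hl] at this ⊢
            simpa using this
          have hle : ∀ x : ℝ,
              (P {ω | x < |Z 1 ω s₁| ∧ x < |Z 1 ω s₂|}).toReal / pN x ≤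
              (P {ω | x < |Z 1 ω s₁| ∧ x < |Z 1 ω s₂|}).toReal /
                (P {ω | x < |Z 1 ω s₂|}).toReal := by
            intro x
            set J := (P {ω | x < |Z 1 ω s₁| ∧ x < |Z 1 ω s₂|}).toReal with hJ
            set Ps := (P {ω | x < |Z 1 ω s₂|}).toReal with hPs
            have hPsle : Ps ≤ pN x := by
              refine ENNReal.toReal_mono (measure_ne_top P _) (measure_mono ?_)
              intro ω hω
              exact lt_of_lt_of_le hω ((norm_le_pi_norm (Z 1 ω) s₂).trans_eq' (Real.norm_eq_abs _).symm)
            rcases eq_or_lt_of_le (ENNReal.toReal_nonneg : (0:ℝ) ≤ Ps) with h0 | h0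
            · have h2 : P {ω | x < |Z 1 ω s₂|} = 0 := by
                rcases (ENNReal.toReal_eq_zero_iff _).mp h0.symm with h | h
                · exact h
                · exact absurd h (measure_ne_top P _)
              have hJ0 : J = 0 := by
                have hle2 : P {ω | x < |Z 1 ω s₁| ∧ x < |Z 1 ω s₂|} ≤
                    P {ω | x < |Z 1 ω s₂|} := measure_mono fun ω hω => hω.2
                rw [h2] at hle2
                have h3 : P {ω | x < |Z 1 ω s₁| ∧ x < |Z 1 ω s₂|} = 0 :=
                  le_antisymm hle2 zero_le
                rw [hJ, h3, ENNReal.toReal_zero]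
              rw [hJ0]; simp
            · exact div_le_div_of_nonneg_left ENNReal.toReal_nonneg h0 hPsle
          have h0le : ∀ x : ℝ, 0 ≤
              (P {ω | x < |Z (-(l₁ : ℕ) : ℤ) ω s₁| ∧ x < |Z (-(l₂ : ℕ) : ℤ) ω s₂|}).toReal / pN x :=
            fun x => div_nonneg ENNReal.toReal_nonneg ENNReal.toReal_nonneg
          refine squeeze_zero h0le (fun x => ?_) (hcai s₁ s₂ hs)
          rw [heq x]
          exact hle x
        · -- different indices
          have hne' : (-(l₁ : ℕ) : ℤ) ≠ (-(l₂ : ℕ) : ℤ) := by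
            intro h; exact hl (by omega)
          have h0le : ∀ x : ℝ, 0 ≤
              (P {ω | x < |Z (-(l₁ : ℕ) : ℤ) ω s₁| ∧ x < |Z (-(l₂ : ℕ) : ℤ) ω s₂|}).toReal / pN x :=
            fun x => div_nonneg ENNReal.toReal_nonneg ENNReal.toReal_nonneg
          refine squeeze_zero h0le (fun x => ?_) (hpai (-(l₁ : ℕ) : ℤ) (-(l₂ : ℕ) : ℤ) hne')
          refine div_le_div_of_nonneg_right ?_ ENNReal.toReal_nonneg
          refine ENNReal.toReal_mono (measure_ne_top P _) (measure_mono ?_)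
          rintro ω ⟨h1, h2⟩
          constructor
          · exact lt_of_lt_of_le h1 ((Real.norm_eq_abs _) ▸ norm_le_pi_norm (Z _ ω) s₁)
          · exact lt_of_lt_of_le h2 ((Real.norm_eq_abs _) ▸ norm_le_pi_norm (Z _ ω) s₂)
      have hQval : ∀ n : ℕ, Q (l₁, l₂, s₁, s₂) n =
          P {ω | c' * a n < |Z (-(l₁ : ℕ) : ℤ) ω s₁| ∧
                 c' * a n < |Z (-(l₂ : ℕ) : ℤ) ω s₂|} := by
        intro n; simp only [hQ]; rw [if_pos hne]
      set J : ℝ → ℝ := fun x =>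
        (P {ω | x < |Z (-(l₁ : ℕ) : ℤ) ω s₁| ∧ x < |Z (-(l₂ : ℕ) : ℤ) ω s₂|}).toReal with hJdef
      have factor : ∀ n : ℕ, (n : ℝ) * (Q (l₁, l₂, s₁, s₂) n).toReal =
          ((n : ℝ) * pN (a n)) * (pN (c' * a n) / pN (a n)) * (J (c' * a n) / pN (c' * a n)) := by
        intro n
        have h1 : pN (a n) ≠ 0 := ne_of_gt (hrv.1 (a n) (ha n))
        have h2 : pN (c' * a n) ≠ 0 := ne_of_gt (hrv.1 (c' * a n) (mul_pos hc' (ha n)))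
        rw [hQval n]
        field_simp
        ring
      have lim2 : Tendsto (fun n : ℕ => pN (c' * a n) / pN (a n)) atTop (nhds (c' ^ (-α))) :=
        (hrv.2 c' hc').comp haT
      have lim3 : Tendsto (fun n : ℕ => J (c' * a n) / pN (c' * a n)) atTop (nhds 0) :=
        hratio.comp (haT.const_mul_atTop hc')
      have hfin2 := (hlim.mul lim2).mul lim3
      rw [mul_zero] at hfin2
      exact Tendsto.congr (fun n => (factor n).symm) hfin2
    · simp only [hQ, if_neg (fun h => hne h)] at *
      simpa using tendsto_const_nhds (α := ℝ) (f := atTop (α := ℕ))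
  refine squeeze_zero (fun n => ENNReal.toReal_nonneg) hreal ?_
  have hsum := tendsto_finset_sum (Finset.univ : Finset T) (fun t _ => htuple t)
  simpa using hsum

/-- For a stationary regularly varying sequence, pairwise asymptotically independent and with
asymptotically independent components, and `D` nonnegative independent of `(Z_i)`, the
probability that for some `j ∈ {1,…,n}` two distinct pairs `(l₁,s₁) ≠ (l₂,s₂)` with
`l₁, l₂ ∈ {0,…,m}` satisfy `D|Z_{j−l₁}^{(s₁)}| > c a_n` and `D|Z_{j−l₂}^{(s₂)}| > c a_n`
tends to `0`. -/
theorem stmt16 {Ω : Type*} [MeasurableSpace Ω] (P : Measure Ω) [IsProbabilityMeasure P]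
    {d : ℕ} (Z : ℤ → Ω → (Fin d → ℝ)) (hZmeas : ∀ i, Measurable (Z i))
    (hstat : StrictlyStationary P Z)
    {α : ℝ} (hα : 0 < α) (hrv : RegVaryingNorm P (Z 1) α)
    (hpai : ∀ i j : ℤ, i ≠ j →
      Tendsto (fun x : ℝ =>
          (P {ω | x < ‖Z i ω‖ ∧ x < ‖Z j ω‖}).toReal / (P {ω | x < ‖Z 1 ω‖}).toReal)
        atTop (nhds 0))
    (hcai : ∀ j k : Fin d, j ≠ k →
      Tendsto (fun x : ℝ =>
          (P {ω | x < |Z 1 ω j| ∧ x < |Z 1 ω k|}).toReal / (P {ω | x < |Z 1 ω k|}).toReal)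
        atTop (nhds 0))
    (a : ℕ → ℝ) (ha : ∀ n, 0 < a n)
    (hlim : Tendsto (fun n : ℕ => (n : ℝ) * (P {ω | a n < ‖Z 1 ω‖}).toReal) atTop (nhds 1))
    (D : Ω → ℝ) (hDmeas : Measurable D) (hD0 : ∀ᵐ ω ∂P, 0 ≤ D ω)
    (hindep : ProbabilityTheory.Indep
      (MeasurableSpace.comap D inferInstance)
      (⨆ i : ℤ, MeasurableSpace.comap (Z i) inferInstance) P) :
    ∀ m : ℕ, ∀ c : ℝ, 0 < c →
      Tendsto (fun n : ℕ =>
          (P {ω | ∃ j ∈ Finset.Icc (1 : ℤ) (n : ℤ), ∃ l₁ ∈ Finset.Icc 0 m,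
              ∃ l₂ ∈ Finset.Icc 0 m, ∃ s₁ s₂ : Fin d, ((l₁, s₁) ≠ (l₂, s₂)) ∧
              c * a n < D ω * |Z (j - (l₁ : ℤ)) ω s₁| ∧
              c * a n < D ω * |Z (j - (l₂ : ℤ)) ω s₂|}).toReal)
        atTop (nhds 0) := by
  intro m c hc
  -- the single-exceedance probability tends to 0
  have hpn0 : Tendsto (fun n : ℕ => (P {ω | a n < ‖Z 1 ω‖}).toReal) atTop (nhds 0) := by
    have h1 : Tendsto (fun n : ℕ => ((n : ℝ) * (P {ω | a n < ‖Z 1 ω‖}).toReal) * (1 / (n : ℝ)))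
        atTop (nhds (1 * 0)) := hlim.mul tendsto_one_div_atTop_nhds_zero_nat
    rw [one_mul] at h1
    refine h1.congr' ?_
    filter_upwards [eventually_ge_atTop 1] with n hn
    have : (n : ℝ) ≠ 0 := by positivity
    field_simp
  -- a tends to infinity
  have haT : Tendsto a atTop atTop := by
    rw [tendsto_atTop]
    intro b
    have hC : (0 : ℝ) < max b 1 := lt_of_lt_of_le one_pos (le_max_right _ _)
    have hδ := hrv.1 (max b 1) hC
    filter_upwards [hpn0.eventually_lt_const hδ] with n hn
    by_contra hab
    push_neg at hab
    have hle : (P {ω | max b 1 < ‖Z 1 ω‖}).toReal ≤ (P {ω | a n < ‖Z 1 ω‖}).toReal := by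
      refine ENNReal.toReal_mono (measure_ne_top P _) (measure_mono ?_)
      intro ω hω
      exact lt_of_le_of_lt (le_trans (le_of_lt hab) (le_max_left _ _)) hω
    linarith
  rw [NormedAddCommGroup.tendsto_nhds_zero]
  intro ε hε
  -- choose M with P(D > M) small
  have hDlim : Tendsto (fun M : ℕ => (P {ω | (M : ℝ) < D ω}).toReal) atTop (nhds 0) := by
    have hmeas : ∀ M : ℕ, NullMeasurableSet {ω | (M : ℝ) < D ω} P :=
      fun M => ((measurableSet_lt measurable_const hDmeas)).nullMeasurableSet
    have hanti : Antitone (fun M : ℕ => {ω | (M : ℝ) < D ω}) := by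
      intro M N hMN ω hω
      have h' : (M : ℝ) ≤ (N : ℝ) := Nat.cast_le.mpr hMN
      exact lt_of_le_of_lt h' hω
    have h0 : (⋂ M : ℕ, {ω | (M : ℝ) < D ω}) = ∅ := by
      ext ω
      simp only [Set.mem_iInter, Set.mem_setOf_eq, Set.mem_empty_iff_false, iff_false, not_forall,
        not_lt]
      obtain ⟨M, hM⟩ := exists_nat_ge (D ω)
      exact ⟨M, hM⟩
    have := tendsto_measure_iInter_atTop (μ := P) hmeas hanti ⟨0, measure_ne_top P _⟩
    rw [h0, measure_empty] at this
    have h2 := (ENNReal.tendsto_toReal (by simp : (0 : ENNReal) ≠ ⊤)).comp this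
    simpa [Function.comp_def] using h2
  obtain ⟨M, hM2, hM1⟩ :=
    ((hDlim.eventually_lt_const (half_pos hε)).and (eventually_ge_atTop 1)).exists
  have hMpos : (0 : ℝ) < M := by exact_mod_cast hM1
  have hdet := det_core P Z hZmeas hstat hrv hpai hcai a ha hlim haT m (c / M)
    (div_pos hc hMpos)
  have hdet' := (tendsto_order.1 hdet).2 (ε / 2) (half_pos hε)
  filter_upwards [hdet'] with n hn
  set E' : Set Ω := {ω | ∃ j ∈ Finset.Icc (1 : ℤ) (n : ℤ), ∃ l₁ ∈ Finset.Icc 0 m,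
      ∃ l₂ ∈ Finset.Icc 0 m, ∃ s₁ s₂ : Fin d, ((l₁, s₁) ≠ (l₂, s₂)) ∧
      (c / M) * a n < |Z (j - (l₁ : ℤ)) ω s₁| ∧
      (c / M) * a n < |Z (j - (l₂ : ℤ)) ω s₂|} with hE'
  have hsub : {ω | ∃ j ∈ Finset.Icc (1 : ℤ) (n : ℤ), ∃ l₁ ∈ Finset.Icc 0 m,
      ∃ l₂ ∈ Finset.Icc 0 m, ∃ s₁ s₂ : Fin d, ((l₁, s₁) ≠ (l₂, s₂)) ∧
      c * a n < D ω * |Z (j - (l₁ : ℤ)) ω s₁| ∧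
      c * a n < D ω * |Z (j - (l₂ : ℤ)) ω s₂|} ⊆ {ω | (M : ℝ) < D ω} ∪ E' := by
    rintro ω ⟨j, hj, l₁, hl₁, l₂, hl₂, s₁, s₂, hne, h1, h2⟩
    by_cases hD : (M : ℝ) < D ω
    · exact Or.inl hD
    · push_neg at hD
      refine Or.inr ⟨j, hj, l₁, hl₁, l₂, hl₂, s₁, s₂, hne, ?_, ?_⟩
      · have : c * a n < M * |Z (j - (l₁ : ℤ)) ω s₁| :=
          lt_of_lt_of_le h1 (mul_le_mul_of_nonneg_right hD (abs_nonneg _))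
        rw [div_mul_eq_mul_div, div_lt_iff₀ hMpos]
        linarith [this]
      · have : c * a n < M * |Z (j - (l₂ : ℤ)) ω s₂| :=
          lt_of_lt_of_le h2 (mul_le_mul_of_nonneg_right hD (abs_nonneg _))
        rw [div_mul_eq_mul_div, div_lt_iff₀ hMpos]
        linarith [this]
  have hb : (P {ω | ∃ j ∈ Finset.Icc (1 : ℤ) (n : ℤ), ∃ l₁ ∈ Finset.Icc 0 m,
      ∃ l₂ ∈ Finset.Icc 0 m, ∃ s₁ s₂ : Fin d, ((l₁, s₁) ≠ (l₂, s₂)) ∧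
      c * a n < D ω * |Z (j - (l₁ : ℤ)) ω s₁| ∧
      c * a n < D ω * |Z (j - (l₂ : ℤ)) ω s₂|}).toReal ≤
        (P {ω | (M : ℝ) < D ω}).toReal + (P E').toReal := by
    calc (P _).toReal ≤ (P {ω | (M : ℝ) < D ω} + P E').toReal :=
        ENNReal.toReal_mono (ENNReal.add_ne_top.2 ⟨measure_ne_top P _, measure_ne_top P _⟩)
          ((measure_mono hsub).trans (measure_union_le _ _))
      _ = _ := ENNReal.toReal_add (measure_ne_top P _) (measure_ne_top P _)
  rw [Real.norm_eq_abs, abs_of_nonneg ENNReal.toReal_nonneg]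
  calc (P _).toReal ≤ (P {ω | (M : ℝ) < D ω}).toReal + (P E').toReal := hb
    _ < ε / 2 + ε / 2 := add_lt_add hM2 hn
    _ = ε := add_halves ε

end
end

section
/- Let (T_i)_{i∈ℤ} be a sequence of i.i.d. unit Fréchet random variables, i.e. P(T_i ≤ x) = e^{−1/x} for x > 0 and T_i > 0 almost surely, and let (a_n) be a sequence of positive reals with lim_{n→∞} n·P(T_1 > a_n) = 1/2. Then for every ε > 0, limsup_{n→∞} P( ∃ i ∈ {1,…,n−1} and ∃ k ∈ {−n,…,3} \ {0} such that T_i > ε·a_n and T_{i+k} > ε·a_n/8 ) ≤ 2·ε^{−2}. -/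
open MeasureTheory Filter ProbabilityTheory

noncomputable section

lemma phi_tendsto {b : ℕ → ℝ} (hb : ∀ n, 0 < b n) (h0 : Tendsto b atTop (nhds 0)) :
    Tendsto (fun n => (1 - Real.exp (-(b n))) / b n) atTop (nhds 1) := by
  have hd : Tendsto (slope Real.exp 0) (nhdsWithin 0 {(0:ℝ)}ᶜ) (nhds 1) := by
    have := (Real.hasDerivAt_exp 0)
    rw [hasDerivAt_iff_tendsto_slope] at this
    simpa using this
  have hneg : Tendsto (fun n => -(b n)) atTop (nhdsWithin 0 {(0:ℝ)}ᶜ) := by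
    apply tendsto_nhdsWithin_of_tendsto_nhds_of_eventually_within
    · simpa using h0.neg
    · filter_upwards with n
      simp only [Set.mem_compl_iff, Set.mem_singleton_iff]
      exact neg_ne_zero.mpr (hb n).ne'
  have := hd.comp hneg
  have heq : ∀ n, slope Real.exp 0 (-(b n)) = (1 - Real.exp (-(b n))) / b n := by
    intro n
    rw [slope_def_field]
    rw [div_eq_div_iff (by simpa using neg_ne_zero.mpr (hb n).ne') (hb n).ne']
    simp [Real.exp_zero]
    ring
  simpa only [Function.comp_def, heq] using this

lemma key_lim {a : ℕ → ℝ} (ha : ∀ n, 0 < a n)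
    (h : Tendsto (fun n : ℕ => (n : ℝ) * (1 - Real.exp (-1 / a n))) atTop (nhds (1/2)))
    {c : ℝ} (hc : 0 < c) :
    Tendsto (fun n : ℕ => (n : ℝ) * (1 - Real.exp (-1 / (c * a n)))) atTop
      (nhds (1/(2*c))) := by
  set t : ℕ → ℝ := fun n => 1 / a n with ht
  have htpos : ∀ n, 0 < t n := fun n => one_div_pos.mpr (ha n)
  -- p n → 0
  have hp0 : Tendsto (fun n : ℕ => 1 - Real.exp (-1 / a n)) atTop (nhds 0) := by
    have : Tendsto (fun n : ℕ => ((n:ℝ))⁻¹ * ((n : ℝ) * (1 - Real.exp (-1 / a n))))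
        atTop (nhds (0 * (1/2))) := (tendsto_inv_atTop_nhds_zero_nat.mul h)
    rw [zero_mul] at this
    refine this.congr' ?_
    filter_upwards [eventually_ge_atTop 1] with n hn
    have : (n:ℝ) ≠ 0 := by positivity
    field_simp
  -- t → 0
  have ht0 : Tendsto t atTop (nhds 0) := by
    have hexp : Tendsto (fun n => Real.exp (-(t n))) atTop (nhds 1) := by
      have : ∀ n, Real.exp (-(t n)) = 1 - (1 - Real.exp (-1 / a n)) := by
        intro n; simp [ht, neg_div]
      simp only [this]
      have h1 : Tendsto (fun n : ℕ => 1 - (1 - Real.exp (-1/a n))) atTop (nhds (1 - 0)) :=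
        tendsto_const_nhds.sub hp0
      simpa using h1
    have hlog : Tendsto (fun n => Real.log (Real.exp (-(t n)))) atTop (nhds (Real.log 1)) :=
      ((Real.continuousAt_log one_ne_zero).tendsto).comp hexp
    simp only [Real.log_exp, Real.log_one] at hlog
    simpa using hlog.neg
  have hphi : Tendsto (fun n => (1 - Real.exp (-(t n))) / t n) atTop (nhds 1) :=
    phi_tendsto htpos ht0
  have hphic : Tendsto (fun n => (1 - Real.exp (-(t n / c))) / (t n / c)) atTop (nhds 1) :=
    phi_tendsto (fun n => by have := htpos n; positivity) (by simpa using ht0.div_const c)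
  -- n * t n → 1/2
  have hnt : Tendsto (fun n : ℕ => (n : ℝ) * t n) atTop (nhds (1/2)) := by
    have key : Tendsto (fun n : ℕ => ((n : ℝ) * (1 - Real.exp (-1 / a n))) /
        ((1 - Real.exp (-(t n))) / t n)) atTop (nhds ((1/2)/1)) := h.div hphi one_ne_zero
    rw [div_one] at key
    refine key.congr ?_
    intro n
    have h1 : -1 / a n = -(t n) := by simp [ht, neg_div]
    have h2 : 0 < 1 - Real.exp (-(t n)) := by
      have : Real.exp (-(t n)) < 1 := by
        rw [Real.exp_lt_one_iff]; linarith [htpos n]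
      linarith
    rw [h1]
    field_simp
  -- conclude
  have key : Tendsto (fun n : ℕ => ((n : ℝ) * t n) *
      ((1 - Real.exp (-(t n / c))) / (t n / c)) / c) atTop (nhds ((1/2) * 1 / c)) :=
    (hnt.mul hphic).div_const c
  have : (1:ℝ)/2 * 1 / c = 1/(2*c) := by field_simp
  rw [this] at key
  refine key.congr ?_
  intro n
  have h1 : -1 / (c * a n) = -(t n / c) := by
    rw [ht]; field_simp
  rw [h1]
  have := htpos n
  field_simp

lemma tendsto_zero_of_nmul {u : ℕ → ℝ} {L : ℝ}
    (h : Tendsto (fun n : ℕ => (n : ℝ) * u n) atTop (nhds L)) :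
    Tendsto u atTop (nhds 0) := by
  have h2 : Tendsto (fun n : ℕ => ((n:ℝ))⁻¹ * ((n : ℝ) * u n)) atTop (nhds (0 * L)) :=
    tendsto_inv_atTop_nhds_zero_nat.mul h
  rw [zero_mul] at h2
  refine h2.congr' ?_
  filter_upwards [eventually_ge_atTop 1] with n hn
  have : (n:ℝ) ≠ 0 := by positivity
  field_simp

/-- For an i.i.d. sequence of unit Fréchet random variables and positive reals `(a_n)` with
`n·P(T_1 > a_n) → 1/2`, for every `ε > 0`,
`limsup_n P(∃ i ∈ {1,…,n−1}, ∃ k ∈ {−n,…,3}\{0}, T_i > ε a_n and T_{i+k} > ε a_n/8) ≤ 2ε^{−2}`. -/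
theorem stmt18 {Ω : Type*} [MeasurableSpace Ω] (P : Measure Ω) [IsProbabilityMeasure P]
    (T : ℤ → Ω → ℝ) (hmeas : ∀ i, Measurable (T i))
    (hindep : iIndepFun T P)
    (hcdf : ∀ i : ℤ, ∀ x : ℝ, 0 < x → (P {ω | T i ω ≤ x}).toReal = Real.exp (-1 / x))
    (hpos : ∀ i : ℤ, ∀ᵐ ω ∂P, 0 < T i ω)
    (a : ℕ → ℝ) (ha : ∀ n, 0 < a n)
    (hlim : Tendsto (fun n : ℕ => (n : ℝ) * (P {ω | a n < T 1 ω}).toReal)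
      atTop (nhds (1 / 2))) :
    ∀ ε : ℝ, 0 < ε →
      limsup (fun n : ℕ =>
          (P {ω | ∃ i ∈ Finset.Icc 1 (n - 1), ∃ k ∈ Finset.Icc (-(n : ℤ)) 3, k ≠ 0 ∧
              ε * a n < T (i : ℤ) ω ∧ ε * a n / 8 < T ((i : ℤ) + k) ω}).toReal)
        atTop ≤ 2 / ε ^ 2 := by
  intro ε hε
  -- tail probabilities
  have hexp_le : ∀ u : ℝ, 0 < u → Real.exp (-1 / u) ≤ 1 := by
    intro u hu
    rw [Real.exp_le_one_iff, neg_div]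
    have : (0:ℝ) ≤ 1 / u := by positivity
    linarith
  have htail : ∀ (i : ℤ) (u : ℝ), 0 < u →
      P {ω | u < T i ω} = ENNReal.ofReal (1 - Real.exp (-1 / u)) := by
    intro i u hu
    have hm : MeasurableSet {ω | T i ω ≤ u} := (hmeas i) measurableSet_Iic
    have hs : {ω | u < T i ω} = {ω | T i ω ≤ u}ᶜ := by ext ω; simp [not_le]
    have h1 : (P {ω | u < T i ω}).toReal = 1 - Real.exp (-1 / u) := by
      rw [hs, prob_compl_eq_one_sub hm,
        ENNReal.toReal_sub_of_le prob_le_one ENNReal.one_ne_top, ENNReal.toReal_one,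
        hcdf i u hu]
    rw [← h1, ENNReal.ofReal_toReal (measure_ne_top P _)]
  set p1 : ℕ → ℝ := fun n => 1 - Real.exp (-1 / (ε * a n)) with hp1def
  set p2 : ℕ → ℝ := fun n => 1 - Real.exp (-1 / (ε * a n / 8)) with hp2def
  have hp1nn : ∀ n, 0 ≤ p1 n := fun n => by
    have := hexp_le (ε * a n) (by have := ha n; positivity)
    show (0:ℝ) ≤ 1 - Real.exp (-1 / (ε * a n)); linarith
  have hp2nn : ∀ n, 0 ≤ p2 n := fun n => by
    have := hexp_le (ε * a n / 8) (by have := ha n; positivity)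
    show (0:ℝ) ≤ 1 - Real.exp (-1 / (ε * a n / 8)); linarith
  -- union bound
  have hbound : ∀ n : ℕ,
      (P {ω | ∃ i ∈ Finset.Icc 1 (n - 1), ∃ k ∈ Finset.Icc (-(n : ℤ)) 3, k ≠ 0 ∧
          ε * a n < T (i : ℤ) ω ∧ ε * a n / 8 < T ((i : ℤ) + k) ω}).toReal ≤
        (n : ℝ) * ((n : ℝ) + 4) * (p1 n * p2 n) := by
    intro n
    have hεa : 0 < ε * a n := by have := ha n; positivity
    have hεa8 : 0 < ε * a n / 8 := by positivity
    set s : Finset ℕ := Finset.Icc 1 (n - 1) with hsdef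
    set tt : Finset ℤ := (Finset.Icc (-(n : ℤ)) 3).filter (fun k => k ≠ 0) with httdef
    set A : ℕ → ℤ → Set Ω := fun i k =>
      {ω | ε * a n < T (i : ℤ) ω} ∩ {ω | ε * a n / 8 < T ((i : ℤ) + k) ω} with hAdef
    have hsub : {ω | ∃ i ∈ Finset.Icc 1 (n - 1), ∃ k ∈ Finset.Icc (-(n : ℤ)) 3, k ≠ 0 ∧
          ε * a n < T (i : ℤ) ω ∧ ε * a n / 8 < T ((i : ℤ) + k) ω} ⊆
        ⋃ i ∈ s, ⋃ k ∈ tt, A i k := by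
      rintro ω ⟨i, hi, k, hk, hk0, h1, h2⟩
      exact Set.mem_biUnion hi (Set.mem_biUnion (Finset.mem_filter.mpr ⟨hk, hk0⟩) ⟨h1, h2⟩)
    have hA : ∀ i ∈ s, ∀ k ∈ tt,
        P (A i k) = ENNReal.ofReal (p1 n) * ENNReal.ofReal (p2 n) := by
      intro i hi k hk
      have hk0 : k ≠ 0 := (Finset.mem_filter.mp hk).2
      have hne : (i : ℤ) ≠ (i : ℤ) + k := by omega
      have hInd := (hindep.indepFun hne).measure_inter_preimage_eq_mul
        (s := Set.Ioi (ε * a n)) (t := Set.Ioi (ε * a n / 8))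
        measurableSet_Ioi measurableSet_Ioi
      have hset1 : T (i:ℤ) ⁻¹' Set.Ioi (ε * a n) = {ω | ε * a n < T (i:ℤ) ω} := rfl
      have hset2 : T ((i:ℤ)+k) ⁻¹' Set.Ioi (ε * a n / 8) =
          {ω | ε * a n / 8 < T ((i:ℤ)+k) ω} := rfl
      rw [hAdef]
      simp only []
      rw [← hset1, ← hset2, hInd, hset1, hset2, htail _ _ hεa, htail _ _ hεa8]
    have hineq : P {ω | ∃ i ∈ Finset.Icc 1 (n - 1), ∃ k ∈ Finset.Icc (-(n : ℤ)) 3, k ≠ 0 ∧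
          ε * a n < T (i : ℤ) ω ∧ ε * a n / 8 < T ((i : ℤ) + k) ω} ≤
        (s.card : ENNReal) * ((tt.card : ENNReal) *
          (ENNReal.ofReal (p1 n) * ENNReal.ofReal (p2 n))) := by
      calc P {ω | ∃ i ∈ Finset.Icc 1 (n - 1), ∃ k ∈ Finset.Icc (-(n : ℤ)) 3, k ≠ 0 ∧
              ε * a n < T (i : ℤ) ω ∧ ε * a n / 8 < T ((i : ℤ) + k) ω}
          ≤ P (⋃ i ∈ s, ⋃ k ∈ tt, A i k) := measure_mono hsub
        _ ≤ ∑ i ∈ s, P (⋃ k ∈ tt, A i k) := measure_biUnion_finset_le s _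
        _ ≤ ∑ i ∈ s, ∑ k ∈ tt, P (A i k) :=
            Finset.sum_le_sum fun i _ => measure_biUnion_finset_le tt _
        _ = ∑ i ∈ s, ∑ k ∈ tt, (ENNReal.ofReal (p1 n) * ENNReal.ofReal (p2 n)) :=
            Finset.sum_congr rfl fun i hi => Finset.sum_congr rfl fun k hk => hA i hi k hk
        _ = (s.card : ENNReal) * ((tt.card : ENNReal) *
              (ENNReal.ofReal (p1 n) * ENNReal.ofReal (p2 n))) := by
            simp [Finset.sum_const, nsmul_eq_mul, mul_assoc]
    have hfin : (s.card : ENNReal) * ((tt.card : ENNReal) *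
        (ENNReal.ofReal (p1 n) * ENNReal.ofReal (p2 n))) ≠ ⊤ := by
      finiteness
    have h2 := ENNReal.toReal_mono hfin hineq
    have h3 : ((s.card : ENNReal) * ((tt.card : ENNReal) *
        (ENNReal.ofReal (p1 n) * ENNReal.ofReal (p2 n)))).toReal =
        (s.card : ℝ) * ((tt.card : ℝ) * (p1 n * p2 n)) := by
      rw [ENNReal.toReal_mul, ENNReal.toReal_mul, ENNReal.toReal_mul,
        ENNReal.toReal_ofReal (hp1nn n), ENNReal.toReal_ofReal (hp2nn n)]
      simp
    rw [h3] at h2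
    refine h2.trans ?_
    have hcards : (s.card : ℝ) ≤ (n : ℝ) := by
      have : s.card ≤ n := by
        rw [hsdef, Nat.card_Icc]; omega
      exact_mod_cast this
    have hcardt : (tt.card : ℝ) ≤ (n : ℝ) + 4 := by
      have h4 : tt.card ≤ (Finset.Icc (-(n : ℤ)) 3).card := Finset.card_filter_le _ _
      have h5 : (Finset.Icc (-(n : ℤ)) 3).card = n + 4 := by
        rw [Int.card_Icc]
        omega
      have : tt.card ≤ n + 4 := by omega
      calc (tt.card : ℝ) ≤ ((n + 4 : ℕ) : ℝ) := by exact_mod_cast this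
        _ = (n : ℝ) + 4 := by push_cast; ring
    have hpp : 0 ≤ p1 n * p2 n := mul_nonneg (hp1nn n) (hp2nn n)
    calc (s.card : ℝ) * ((tt.card : ℝ) * (p1 n * p2 n))
        ≤ (n : ℝ) * (((n:ℝ) + 4) * (p1 n * p2 n)) := by
          gcongr
      _ = (n : ℝ) * ((n : ℝ) + 4) * (p1 n * p2 n) := by ring
  -- limits
  have hlim' : Tendsto (fun n : ℕ => (n : ℝ) * (1 - Real.exp (-1 / a n))) atTop
      (nhds (1 / 2)) := by
    refine hlim.congr fun n => ?_
    rw [htail 1 (a n) (ha n), ENNReal.toReal_ofReal]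
    have := hexp_le (a n) (ha n); linarith
  have hL1 : Tendsto (fun n : ℕ => (n : ℝ) * p1 n) atTop (nhds (1 / (2 * ε))) :=
    key_lim ha hlim' hε
  have hL2 : Tendsto (fun n : ℕ => (n : ℝ) * p2 n) atTop (nhds (1 / (2 * (ε / 8)))) := by
    have := key_lim ha hlim' (c := ε / 8) (by positivity)
    refine this.congr fun n => ?_
    have : ε / 8 * a n = ε * a n / 8 := by ring
    rw [this]
  have hp1zero : Tendsto p1 atTop (nhds 0) := tendsto_zero_of_nmul hL1
  -- final limit of the bound
  have hg : Tendsto (fun n : ℕ => (n : ℝ) * ((n : ℝ) + 4) * (p1 n * p2 n)) atTop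
      (nhds (2 / ε ^ 2)) := by
    have hcomb : Tendsto (fun n : ℕ =>
        ((n : ℝ) * p1 n) * ((n : ℝ) * p2 n) + 4 * (p1 n * ((n : ℝ) * p2 n))) atTop
        (nhds ((1 / (2 * ε)) * (1 / (2 * (ε / 8))) + 4 * (0 * (1 / (2 * (ε / 8)))))) :=
      (hL1.mul hL2).add ((hp1zero.mul hL2).const_mul 4)
    have hval : (1 / (2 * ε)) * (1 / (2 * (ε / 8))) + 4 * (0 * (1 / (2 * (ε / 8)))) =
        2 / ε ^ 2 := by
      field_simp
      ring
    rw [hval] at hcomb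
    refine hcomb.congr fun n => ?_
    ring
  -- conclude via limsup
  have hcb : IsCoboundedUnder (· ≤ ·) atTop (fun n : ℕ =>
      (P {ω | ∃ i ∈ Finset.Icc 1 (n - 1), ∃ k ∈ Finset.Icc (-(n : ℤ)) 3, k ≠ 0 ∧
          ε * a n < T (i : ℤ) ω ∧ ε * a n / 8 < T ((i : ℤ) + k) ω}).toReal) := by
    refine Filter.IsBoundedUnder.isCoboundedUnder_le ?_
    exact Filter.isBoundedUnder_of ⟨0, fun n => ENNReal.toReal_nonneg⟩
  have hbd : IsBoundedUnder (· ≤ ·) atTop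
      (fun n : ℕ => (n : ℝ) * ((n : ℝ) + 4) * (p1 n * p2 n)) :=
    hg.isBoundedUnder_le
  calc limsup _ atTop ≤ limsup (fun n : ℕ => (n : ℝ) * ((n : ℝ) + 4) * (p1 n * p2 n)) atTop :=
        limsup_le_limsup (Eventually.of_forall hbound) hcb hbd
    _ = 2 / ε ^ 2 := hg.limsup_eq

end
end
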